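/- arXiv:2507.11701 — 7 statements merged into one kernel-verified Lean document; each statement's English description precedes it below -/
import Mathlib

section
/- For 1 ≤ s ≤ n, the number-of-ones enumerator of [s]-restricted parking functions satisfies Σ_{π ∈ PF_{n|[s]}} x^{#π⁻¹({1})} = Σ_{i=s}^{n} C(n,i)·x·(x+i)^{i−1}·(s−i−1)^{n−i} as polynomials in x. -/
open Finset Polynomial

lemma fd_pow : ∀ n : ℕ, ∀ j < n, ∑ i ∈ range (n+1), (-1:ℚ)^i * (n.choose i) * (i:ℚ)^j = 0 := by
  intro n
  induction n with
  | zero => intro j hj; omega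
  | succ n ih =>
    intro j hj
    match j with
    | 0 =>
      simp only [pow_zero, mul_one]
      have := @Int.alternating_sum_range_choose (n+1)
      have h2 : ((∑ m ∈ range (n + 1 + 1), (-1:ℤ) ^ m * ↑((n+1).choose m) : ℤ) : ℚ) = ((if n+1 = 0 then 1 else 0 : ℤ) : ℚ) := by rw [this]
      push_cast at h2
      simpa using h2
    | j + 1 =>
      have key : ∀ i ∈ range (n+2), (-1:ℚ)^i * ((n+1).choose i) * (i:ℚ)^(j+1)
          = -((n:ℚ)+1) * (if i = 0 then 0 else (-1:ℚ)^(i-1) * ((n).choose (i-1)) * ((i-1:ℕ)+1:ℚ)^j) := by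
        intro i _
        match i with
        | 0 => simp
        | i + 1 =>
          simp only [if_neg (Nat.succ_ne_zero i), Nat.add_sub_cancel]
          have hc : ((n+1).choose (i+1) : ℚ) * ((i:ℚ)+1) = ((n:ℚ)+1) * (n.choose i) := by
            have h := Nat.add_one_mul_choose_eq n i
            have h' : ((n+1) * n.choose i : ℕ) = ((n+1).choose (i+1) * (i+1) : ℕ) := h
            have := congrArg (Nat.cast : ℕ → ℚ) h'
            push_cast at this
            linarith [this]
          push_cast
          calc (-1:ℚ)^(i+1) * ((n+1).choose (i+1)) * ((i:ℚ)+1)^(j+1)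
              = (-1) * ((-1:ℚ)^i * (((n+1).choose (i+1):ℚ) * ((i:ℚ)+1)) * ((i:ℚ)+1)^j) := by ring
            _ = (-1) * ((-1:ℚ)^i * (((n:ℚ)+1) * (n.choose i)) * ((i:ℚ)+1)^j) := by rw [hc]
            _ = -((n:ℚ)+1) * ((-1:ℚ)^i * (n.choose i) * ((i:ℚ)+1)^j) := by ring
      rw [Finset.sum_congr rfl key, ← Finset.mul_sum]
      rw [Finset.sum_range_succ']
      simp only [if_neg (Nat.succ_ne_zero _), Nat.add_sub_cancel, if_pos rfl, add_zero]
      have expand : ∀ t ∈ range (n+1), (-1:ℚ)^t * (n.choose t) * ((t:ℚ)+1)^j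
          = ∑ u ∈ range (j+1), (j.choose u : ℚ) * ((-1:ℚ)^t * (n.choose t) * (t:ℚ)^u) := by
        intro t _
        rw [add_pow]
        rw [Finset.mul_sum]
        refine Finset.sum_congr rfl fun u _ => by ring
      rw [Finset.sum_congr rfl expand, Finset.sum_comm]
      have z : ∀ u ∈ range (j+1), ∑ t ∈ range (n+1), (j.choose u : ℚ) * ((-1:ℚ)^t * (n.choose t) * (t:ℚ)^u) = 0 := by
        intro u hu
        rw [← Finset.mul_sum, ih u (by simp at hu; omega), mul_zero]
      rw [Finset.sum_congr rfl z]
      simp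

lemma fd_poly (n : ℕ) (p : ℚ[X]) (h : p.natDegree < n) :
    ∑ i ∈ range (n+1), (-1:ℚ)^i * (n.choose i) * p.eval (i:ℚ) = 0 := by
  have e : ∀ i ∈ range (n+1), (-1:ℚ)^i * (n.choose i) * p.eval (i:ℚ)
      = ∑ j ∈ range (p.natDegree + 1), p.coeff j * ((-1:ℚ)^i * (n.choose i) * (i:ℚ)^j) := by
    intro i _
    rw [Polynomial.eval_eq_sum_range, Finset.mul_sum]
    exact Finset.sum_congr rfl fun j _ => by ring
  rw [Finset.sum_congr rfl e, Finset.sum_comm]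
  refine Finset.sum_eq_zero fun j hj => ?_
  rw [← Finset.mul_sum, fd_pow n j (by simp at hj; omega), mul_zero]

noncomputable def qpoly (n m : ℕ) : ℚ[X] :=
  (∏ t ∈ Icc 1 (m-1), (X - C (t:ℚ))) * X^(n-m)

lemma qpoly_natDegree (n m : ℕ) (h1 : 1 ≤ m) (h2 : m ≤ n) : (qpoly n m).natDegree = n - 1 := by
  have hmonic : ((∏ t ∈ Icc 1 (m-1), (X - C (t:ℚ)))).Monic :=
    monic_prod_of_monic _ _ (fun t _ => monic_X_sub_C _)
  have h3 : ((∏ t ∈ Icc 1 (m-1), (X - C (t:ℚ)))).natDegree = m - 1 := by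
    rw [natDegree_prod_of_monic _ _ (fun t _ => monic_X_sub_C _)]
    simp only [natDegree_X_sub_C]
    simp [Nat.card_Icc]
  rw [qpoly, natDegree_mul (hmonic.ne_zero) (pow_ne_zero _ X_ne_zero), h3, natDegree_X_pow]
  omega

lemma icc_eq_ico (m : ℕ) (h : 1 ≤ m) : Icc 1 (m-1) = Ico 1 m := by
  rw [← Finset.Ico_add_one_right_eq_Icc]
  congr 1
  omega

lemma qpoly_eval (n m : ℕ) (h1 : 1 ≤ m) (i : ℕ) (hi : 1 ≤ i) :
    (qpoly n m).eval (i:ℚ) = ((m-1).factorial : ℚ) * ((i-1).choose (m-1)) * (i:ℚ)^(n-m) := by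
  rw [qpoly, eval_mul, eval_pow, eval_X]
  congr 1
  rw [eval_prod]
  simp only [eval_sub, eval_X, eval_C]
  have key : ∏ t ∈ Icc 1 (m-1), ((i:ℚ) - t) = ((i-1).descFactorial (m-1) : ℚ) := by
    rcases lt_or_ge (i-1) (m-1) with hlt | hge
    · rw [Nat.descFactorial_eq_zero_iff_lt.mpr hlt]
      have hmem : i ∈ Icc 1 (m-1) := by simp; omega
      rw [Finset.prod_eq_zero hmem] <;> simp
    · rw [Nat.descFactorial_eq_prod_range, Nat.cast_prod, icc_eq_ico m h1,
        Finset.prod_Ico_eq_prod_range]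
      refine Finset.prod_congr rfl fun u hu => ?_
      simp only [Finset.mem_range] at hu
      rw [show i - 1 - u = i - (1 + u) from by omega, Nat.cast_sub (by omega)]
      all_goals push_cast; try ring
  rw [key, Nat.descFactorial_eq_factorial_mul_choose]
  push_cast
  ring

lemma neg_prod (k : ℕ) : ∏ t ∈ Icc 1 k, (0 - (t:ℚ)) = (-1)^k * (k.factorial) := by
  induction k with
  | zero => simp
  | succ k ih =>
    rw [Finset.prod_Icc_succ_top (by omega), ih, Nat.factorial_succ]
    push_cast
    ring

lemma qpoly_eval_zero (n m : ℕ) (h1 : 1 ≤ m) (h2 : m ≤ n) :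
    (qpoly n m).eval 0 = if m = n then (-1:ℚ)^(n-1) * ((n-1).factorial) else 0 := by
  rw [qpoly, eval_mul, eval_pow, eval_X]
  rcases eq_or_ne m n with rfl | hne
  · rw [Nat.sub_self, pow_zero, mul_one, eval_prod]
    simp only [eval_sub, eval_X, eval_C, if_pos rfl]
    exact neg_prod (m-1)
  · rw [if_neg hne, zero_pow (by omega), mul_zero]

lemma cm (n m : ℕ) (h1 : 1 ≤ m) (h2 : m ≤ n) :
    ∑ i ∈ Icc m n, (-1:ℤ)^(n-i) * (n.choose i) * ((i-1).choose (m-1)) * (i:ℤ)^(n-m)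
      = if m = n then 1 else 0 := by
  have h0 := fd_poly n (qpoly n m) (by rw [qpoly_natDegree n m h1 h2]; omega)
  rw [Finset.sum_range_succ'] at h0
  have hIcc : Icc 1 n = Ico 1 (n+1) := (Finset.Ico_add_one_right_eq_Icc 1 n).symm
  -- rewrite range n sum as Icc 1 n sum
  have hre : ∑ i ∈ range n, (-1:ℚ)^(i+1) * (n.choose (i+1)) * (qpoly n m).eval ((i+1:ℕ):ℚ)
      = ∑ i ∈ Icc 1 n, (-1:ℚ)^i * (n.choose i) * (qpoly n m).eval (i:ℚ) := by
    rw [hIcc, Finset.sum_Ico_eq_sum_range]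
    simp only [Nat.add_sub_cancel]
    refine Finset.sum_congr rfl fun u _ => by rw [Nat.add_comm 1 u]
  rw [hre] at h0
  have heval : ∀ i ∈ Icc 1 n, (-1:ℚ)^i * (n.choose i) * (qpoly n m).eval (i:ℚ)
      = ((m-1).factorial : ℚ) * ((-1:ℚ)^i * (n.choose i) * ((i-1).choose (m-1)) * (i:ℚ)^(n-m)) := by
    intro i hi
    simp only [Finset.mem_Icc] at hi
    rw [qpoly_eval n m h1 i hi.1]
    ring
  rw [Finset.sum_congr rfl heval, ← Finset.mul_sum] at h0
  simp only [pow_zero, one_mul, Nat.choose_zero_right, Nat.cast_one, Nat.cast_zero] at h0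
  rw [qpoly_eval_zero n m h1 h2] at h0
  -- now: (m-1)! * S + (if m = n then (-1)^(n-1)*(n-1)! else 0) = 0
  set S : ℚ := ∑ i ∈ Icc 1 n, (-1:ℚ)^i * (n.choose i) * ((i-1).choose (m-1)) * (i:ℚ)^(n-m) with hS
  have hSval : S = (-1:ℚ)^n * (if m = n then 1 else 0) := by
    rcases eq_or_ne m n with rfl | hne
    · rw [if_pos rfl] at h0 ⊢
      have hfac : ((m-1).factorial : ℚ) ≠ 0 := Nat.cast_ne_zero.mpr (Nat.factorial_ne_zero _)
      have : ((m-1).factorial : ℚ) * S = ((m-1).factorial : ℚ) * ((-1:ℚ)^m * 1) := by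
        rw [mul_one]
        have hn1 : (-1:ℚ)^m = -(-1:ℚ)^(m-1) := by
          rw [show m = (m-1)+1 from by omega, pow_succ]
          simp [show m - 1 + 1 - 1 = m - 1 from by omega]
        rw [hn1]
        linarith [h0]
      exact mul_left_cancel₀ hfac this
    · rw [if_neg hne] at h0 ⊢
      rw [mul_zero]
      have hfac : ((m-1).factorial : ℚ) ≠ 0 := Nat.cast_ne_zero.mpr (Nat.factorial_ne_zero _)
      rw [add_zero] at h0
      rcases mul_eq_zero.mp h0 with h | h
      · exact absurd h hfac
      · exact h
  -- now the integer statement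
  have hsub : ∑ i ∈ Icc m n, (-1:ℤ)^(n-i) * (n.choose i) * ((i-1).choose (m-1)) * (i:ℤ)^(n-m)
      = ∑ i ∈ Icc 1 n, (-1:ℤ)^(n-i) * (n.choose i) * ((i-1).choose (m-1)) * (i:ℤ)^(n-m) := by
    refine Finset.sum_subset (fun x hx => ?_) (fun x hx hnx => ?_)
    · simp only [Finset.mem_Icc] at hx ⊢; omega
    · simp only [Finset.mem_Icc] at hx hnx
      have : (x-1).choose (m-1) = 0 := Nat.choose_eq_zero_of_lt (by omega)
      rw [this]
      simp
  rw [hsub]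
  have hsign : ∀ i ∈ Icc 1 n, (-1:ℤ)^(n-i) * (n.choose i) * ((i-1).choose (m-1)) * (i:ℤ)^(n-m)
      = (-1:ℤ)^n * ((-1:ℤ)^i * (n.choose i) * ((i-1).choose (m-1)) * (i:ℤ)^(n-m)) := by
    intro i hi
    simp only [Finset.mem_Icc] at hi
    have : (-1:ℤ)^(n-i) = (-1:ℤ)^n * (-1:ℤ)^i := by
      rw [← pow_add, show n + i = (n - i) + 2*i from by omega, pow_add, pow_mul]
      simp
    rw [this]; ring
  rw [Finset.sum_congr rfl hsign, ← Finset.mul_sum]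
  have hcast : (∑ i ∈ Icc 1 n, (-1:ℤ)^i * (n.choose i) * ((i-1).choose (m-1)) * (i:ℤ)^(n-m) : ℤ)
      = (-1:ℤ)^n * (if m = n then 1 else 0) := by
    have : ((∑ i ∈ Icc 1 n, (-1:ℤ)^i * (n.choose i) * ((i-1).choose (m-1)) * (i:ℤ)^(n-m) : ℤ) : ℚ)
        = (((-1:ℤ)^n * (if m = n then 1 else 0) : ℤ) : ℚ) := by
      push_cast
      rw [← hS]  -- S def
      rw [hSval]
      try rfl
    exact_mod_cast this
  rw [hcast]
  rcases eq_or_ne m n with rfl | hne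
  · simp [← pow_add, ← two_mul, pow_mul]
  · simp [hne]

lemma abel0 (n : ℕ) (hn : 1 ≤ n) :
    ∑ i ∈ Icc 1 n, C (n.choose i : ℤ) * X * (X + C (i:ℤ))^(i-1) * C ((-(i:ℤ))^(n-i))
      = (X : ℤ[X])^n := by
  have hterm : ∀ i ∈ Icc 1 n, C (n.choose i : ℤ) * X * (X + C (i:ℤ))^(i-1) * C ((-(i:ℤ))^(n-i))
      = ∑ m ∈ Icc 1 n,
          C ((-1:ℤ)^(n-i) * (n.choose i) * ((i-1).choose (m-1)) * (i:ℤ)^(n-m)) * X^m := by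
    intro i hi
    simp only [Finset.mem_Icc] at hi
    rw [add_pow, show i - 1 + 1 = i from by omega]
    rw [Finset.mul_sum, Finset.sum_mul]
    have step : ∀ j ∈ range i, C (n.choose i : ℤ) * X * (X^j * (C (i:ℤ))^(i-1-j) * ((i-1).choose j : ℤ[X])) * C ((-(i:ℤ))^(n-i))
        = C ((-1:ℤ)^(n-i) * (n.choose i) * ((i-1).choose j) * (i:ℤ)^(n-(j+1))) * X^(j+1) := by
      intro j hj
      simp only [Finset.mem_range] at hj
      have hne : (-(i:ℤ))^(n-i) = (-1:ℤ)^(n-i) * (i:ℤ)^(n-i) := by rw [neg_pow]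
      have hpow : (i:ℤ)^(i-1-j) * (i:ℤ)^(n-i) = (i:ℤ)^(n-(j+1)) := by
        rw [← pow_add]
        congr 1
        omega
      rw [← C_eq_natCast, ← C_pow, hne, ← hpow]
      simp only [C_mul]
      ring
    rw [Finset.sum_congr rfl step]
    -- reindex j+1 = m
    have hIcc : Icc 1 i = Ico 1 (i+1) := (Finset.Ico_add_one_right_eq_Icc 1 i).symm
    have hre : ∑ m ∈ Icc 1 i,
          C ((-1:ℤ)^(n-i) * (n.choose i) * ((i-1).choose (m-1)) * (i:ℤ)^(n-m)) * X^m
        = ∑ j ∈ range i,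
          C ((-1:ℤ)^(n-i) * (n.choose i) * ((i-1).choose j) * (i:ℤ)^(n-(j+1))) * X^(j+1) := by
      rw [hIcc, Finset.sum_Ico_eq_sum_range]
      simp only [Nat.add_sub_cancel]
      exact Finset.sum_congr rfl fun u _ => by rw [Nat.add_comm 1 u, Nat.add_sub_cancel]
    rw [← hre]
    refine Finset.sum_subset (fun x hx => ?_) (fun x hx hnx => ?_)
    · simp only [Finset.mem_Icc] at hx ⊢; omega
    · simp only [Finset.mem_Icc] at hx hnx
      have : (i-1).choose (x-1) = 0 := Nat.choose_eq_zero_of_lt (by omega)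
      rw [this]
      simp
  rw [Finset.sum_congr rfl hterm, Finset.sum_comm]
  have inner : ∀ m ∈ Icc 1 n,
      ∑ i ∈ Icc 1 n, C ((-1:ℤ)^(n-i) * (n.choose i) * ((i-1).choose (m-1)) * (i:ℤ)^(n-m)) * X^m
        = (if m = n then X^n else 0) := by
    intro m hm
    simp only [Finset.mem_Icc] at hm
    rw [← Finset.sum_mul, ← map_sum C]
    have hshrink : ∑ i ∈ Icc 1 n, ((-1:ℤ)^(n-i) * (n.choose i) * ((i-1).choose (m-1)) * (i:ℤ)^(n-m))
        = ∑ i ∈ Icc m n, ((-1:ℤ)^(n-i) * (n.choose i) * ((i-1).choose (m-1)) * (i:ℤ)^(n-m)) := by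
      refine (Finset.sum_subset (fun x hx => ?_) (fun x hx hnx => ?_)).symm
      · simp only [Finset.mem_Icc] at hx ⊢; omega
      · simp only [Finset.mem_Icc] at hx hnx
        have : (x-1).choose (m-1) = 0 := Nat.choose_eq_zero_of_lt (by omega)
        rw [this]; simp
    rw [hshrink, cm n m hm.1 hm.2]
    rcases eq_or_ne m n with rfl | hne
    · simp
    · simp [hne]
  rw [Finset.sum_congr rfl inner, Finset.sum_ite_eq' (Icc 1 n) n (fun m => (X:ℤ[X])^n)]
  simp [hn]

noncomputable def Rp (n s : ℕ) : ℤ[X] :=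
  ∑ i ∈ Icc s n, C (n.choose i : ℤ) * X * (X + C (i:ℤ))^(i-1) * C (((s:ℤ) - i - 1)^(n-i))

lemma Rrec (n s : ℕ) (hs : 2 ≤ s) (hn : s ≤ n) :
    ∑ m ∈ range (n-s+2), C (n.choose m : ℤ) * Rp (n-m) (s-1) = Rp n s := by
  have hcast : ((s-1:ℕ):ℤ) = (s:ℤ) - 1 := by
    have := Nat.cast_sub (by omega : 1 ≤ s) (R := ℤ)
    simpa using this
  have hext : ∀ m ∈ range (n-s+2), C (n.choose m : ℤ) * Rp (n-m) (s-1)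
      = ∑ i ∈ Icc (s-1) n, C (n.choose m : ℤ) * (C ((n-m).choose i : ℤ) * X * (X + C (i:ℤ))^(i-1)
          * C (((s:ℤ) - i - 2)^(n-m-i))) := by
    intro m hm
    simp only [Finset.mem_range] at hm
    rw [Rp, Finset.mul_sum]
    have e1 : ∑ i ∈ Icc (s-1) (n-m), C (n.choose m : ℤ) * (C ((n-m).choose i : ℤ) * X * (X + C (i:ℤ))^(i-1)
          * C ((((s-1:ℕ)):ℤ) - i - 1)^((n-m)-i))
        = ∑ i ∈ Icc (s-1) n, C (n.choose m : ℤ) * (C ((n-m).choose i : ℤ) * X * (X + C (i:ℤ))^(i-1)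
          * C ((((s-1:ℕ)):ℤ) - i - 1)^((n-m)-i)) := by
      refine Finset.sum_subset (fun x hx => ?_) (fun x hx hnx => ?_)
      · simp only [Finset.mem_Icc] at hx ⊢; omega
      · simp only [Finset.mem_Icc] at hx hnx
        have h0 : (n-m).choose x = 0 := Nat.choose_eq_zero_of_lt (by omega)
        rw [h0]; simp
    refine (?_ : _ = ∑ i ∈ Icc (s-1) (n-m), _).trans (e1.trans ?_)
    · exact Finset.sum_congr rfl fun i hi => by rw [C_pow]
    · refine Finset.sum_congr rfl fun i hi => ?_
      rw [hcast, show ((s:ℤ) - 1 - ↑i - 1) = ((s:ℤ) - ↑i - 2) from by ring, C_pow]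
  rw [Finset.sum_congr rfl hext, Finset.sum_comm]
  have inner : ∀ i ∈ Icc (s-1) n,
      ∑ m ∈ range (n-s+2), C (n.choose m : ℤ) * (C ((n-m).choose i : ℤ) * X * (X + C (i:ℤ))^(i-1)
          * C (((s:ℤ) - i - 2)^(n-m-i)))
      = C (n.choose i : ℤ) * X * (X + C (i:ℤ))^(i-1) * C (((s:ℤ) - i - 1)^(n-i)) := by
    intro i hi
    simp only [Finset.mem_Icc] at hi
    have hrange : range (n-i+1) ⊆ range (n-s+2) := by
      apply Finset.range_subset_range.mpr; omega
    rw [← Finset.sum_subset hrange (fun m hm hnm => ?_)]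
    swap
    · simp only [Finset.mem_range] at hm hnm
      have h0 : (n-m).choose i = 0 := Nat.choose_eq_zero_of_lt (by omega)
      rw [h0]; simp
    have hterm : ∀ m ∈ range (n-i+1),
        C (n.choose m : ℤ) * (C ((n-m).choose i : ℤ) * X * (X + C (i:ℤ))^(i-1)
          * C (((s:ℤ) - i - 2)^(n-m-i)))
        = (C (((n-i).choose m : ℤ) * ((s:ℤ) - i - 2)^((n-i)-m))) * (C (n.choose i : ℤ) * X * (X + C (i:ℤ))^(i-1)) := by
      intro m hm
      simp only [Finset.mem_range] at hm
      have h3 : (m+i).choose m = (m+i).choose i := by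
        rw [← Nat.choose_symm (Nat.le_add_right m i), Nat.add_sub_cancel_left]
      have hcm : n.choose m * (n-m).choose i = n.choose i * (n-i).choose m := by
        have h1 := Nat.choose_mul (n := n) (show m ≤ m + i by omega)
        have h2 := Nat.choose_mul (n := n) (show i ≤ m + i by omega)
        rw [Nat.add_sub_cancel_left] at h1
        rw [Nat.add_sub_cancel] at h2
        rw [← h1, h3, h2]
      have hcm' : ((n.choose m : ℤ)) * ((n-m).choose i) = (n.choose i) * ((n-i).choose m) := by
        exact_mod_cast congrArg (Nat.cast : ℕ → ℤ) hcm
      have hexp : n - m - i = (n-i) - m := by omega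
      rw [hexp]
      simp only [C_mul]
      calc C (n.choose m : ℤ) * (C ((n-m).choose i : ℤ) * X * (X + C (i:ℤ))^(i-1) * C (((s:ℤ) - i - 2)^((n-i)-m)))
          = (C (n.choose m : ℤ) * C ((n-m).choose i : ℤ)) * X * (X + C (i:ℤ))^(i-1) * C (((s:ℤ) - i - 2)^((n-i)-m)) := by ring
        _ = (C (n.choose i : ℤ) * C ((n-i).choose m : ℤ)) * X * (X + C (i:ℤ))^(i-1) * C (((s:ℤ) - i - 2)^((n-i)-m)) := by
            rw [← C_mul, hcm', C_mul]
        _ = C ((n-i).choose m : ℤ) * C (((s:ℤ) - i - 2)^((n-i)-m)) * (C (n.choose i : ℤ) * X * (X + C (i:ℤ))^(i-1)) := by ring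
    rw [Finset.sum_congr rfl hterm, ← Finset.sum_mul, ← map_sum C]
    have hbin : ∑ m ∈ range (n-i+1), ((n-i).choose m : ℤ) * ((s:ℤ) - i - 2)^((n-i)-m)
        = ((s:ℤ) - i - 1)^(n-i) := by
      have h := add_pow (1 : ℤ) ((s:ℤ) - i - 2) (n-i)
      rw [show (1 + ((s:ℤ) - i - 2)) = (s:ℤ) - i - 1 from by ring] at h
      rw [h]
      refine Finset.sum_congr rfl fun m _ => by rw [one_pow]; ring
    rw [hbin]
    ring
  rw [Finset.sum_congr rfl inner, Rp]
  refine (Finset.sum_subset (fun x hx => ?_) (fun x hx hnx => ?_)).symm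
  · simp only [Finset.mem_Icc] at hx ⊢; omega
  · simp only [Finset.mem_Icc] at hx hnx
    have hx' : x = s - 1 := by omega
    subst hx'
    rw [hcast, show ((s:ℤ) - ((s:ℤ)-1) - 1) = 0 from by push_cast; ring]
    rw [zero_pow (by omega : n - (s-1) ≠ 0), map_zero, mul_zero]

open Classical in
noncomputable def G (α : Type) [Fintype α] [DecidableEq α] (s : ℕ) : Polynomial ℤ :=
  ∑ f : α → Fin s,
    if (∀ i ∈ Finset.Icc 1 (Fintype.card α), i ≤ (Finset.univ.filter (fun j => (f j).val < i)).card)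
    then (Polynomial.X : Polynomial ℤ) ^ (Finset.univ.filter (fun j => (f j).val = 0)).card
    else 0


lemma card_comp {α β : Type} [Fintype α] [Fintype β] (e : α ≃ β) (p : α → Prop)
    [DecidablePred p] [∀ j, Decidable (p (e.symm j))] :
    (univ.filter (fun j : β => p (e.symm j))).card = (univ.filter p).card := by
  refine (Finset.card_equiv e (fun i => ?_)).symm
  simp

lemma Gcongr {α β : Type} [Fintype α] [DecidableEq α] [Fintype β] [DecidableEq β] (e : α ≃ β) (s : ℕ) : G α s = G β s := by
  classical
  rw [G, G]
  refine Fintype.sum_equiv (Equiv.arrowCongr e (Equiv.refl (Fin s))) _ _ (fun f => ?_)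
  simp only [Equiv.arrowCongr_apply, Equiv.refl_apply, Function.comp, Equiv.coe_refl, id]
  have h1 : (univ.filter (fun j : β => (f (e.symm j)).val = 0)).card
      = (univ.filter (fun j : α => (f j).val = 0)).card := card_comp e (fun j => (f j).val = 0)
  have hcond : (∀ i ∈ Icc 1 (Fintype.card α), i ≤ (univ.filter (fun j : α => (f j).val < i)).card)
      ↔ (∀ i ∈ Icc 1 (Fintype.card β), i ≤ (univ.filter (fun j : β => (f (e.symm j)).val < i)).card) := by
    rw [Fintype.card_congr e]
    refine forall₂_congr fun i _ => ?_
    rw [card_comp e (fun j => (f j).val < i)]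
  simp only [h1, hcond]


lemma Gbase (n : ℕ) : G (Fin n) 1 = (X : ℤ[X])^n := by
  classical
  rw [G]
  rw [Fintype.sum_unique]
  have hc : ∀ (i : ℕ), (univ.filter (fun j : Fin n => ((default : Fin n → Fin 1) j).val < i)) =
      if 1 ≤ i then univ else ∅ := by
    intro i
    split
    · refine Finset.filter_true_of_mem fun j _ => ?_
      simp only [Fin.val_eq_zero]
      omega
    · refine Finset.filter_false_of_mem fun j _ => ?_
      simp only [Fin.val_eq_zero]
      omega
  have hcond : (∀ i ∈ Icc 1 (Fintype.card (Fin n)), i ≤ (univ.filter (fun j : Fin n => ((default : Fin n → Fin 1) j).val < i)).card) := by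
    intro i hi
    simp only [Finset.mem_Icc, Fintype.card_fin] at hi
    rw [hc i, if_pos hi.1]
    simpa using hi.2
  rw [if_pos hcond]
  congr 1
  have : (univ.filter (fun j : Fin n => ((default : Fin n → Fin 1) j).val = 0)) = univ :=
    Finset.filter_true_of_mem fun j _ => by simp
  rw [this]
  simp

lemma Grec (n s : ℕ) (hs : 2 ≤ s) (hn : s ≤ n) :
    G (Fin n) s = ∑ m ∈ range (n - s + 2), C (n.choose m : ℤ) * G (Fin (n - m)) (s - 1) := by
  classical
  set top : Fin s := ⟨s-1, by omega⟩ with htop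
  have hβcard : ∀ T : Finset (Fin n), Fintype.card {j : Fin n // j ∉ T} = n - T.card := by
    intro T
    have h1 := Fintype.card_subtype_compl (fun j : Fin n => j ∈ T)
    rw [Fintype.card_fin, Fintype.card_coe] at h1
    exact h1
  have stepB : ∀ T : Finset (Fin n),
      (∑ f ∈ univ.filter (fun f : Fin n → Fin s => univ.filter (fun j => f j = top) = T),
        if (∀ i ∈ Finset.Icc 1 (Fintype.card (Fin n)), i ≤ (Finset.univ.filter (fun j => (f j).val < i)).card)
        then (Polynomial.X : Polynomial ℤ) ^ (Finset.univ.filter (fun j => (f j).val = 0)).card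
        else 0)
      = if T.card ≤ n - s + 1 then G {j : Fin n // j ∉ T} (s-1) else 0 := by
    intro T
    -- facts about any f in the fiber
    have hmem : ∀ (f : Fin n → Fin s), univ.filter (fun j => f j = top) = T →
        ∀ j, (f j = top ↔ j ∈ T) := by
      intro f hfib j
      rw [← hfib]
      simp
    have hfv : ∀ (f : Fin n → Fin s), univ.filter (fun j => f j = top) = T →
        ∀ j, j ∉ T → (f j).val < s - 1 := by
      intro f hfib j hj
      have h1 : f j ≠ top := fun h => hj ((hmem f hfib j).mp h)
      have h2 : (f j).val < s := (f j).isLt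
      have h3 : (f j).val ≠ s - 1 := fun h => h1 (Fin.ext h)
      omega
    -- the down map
    set down : (Fin n → Fin s) → ({j : Fin n // j ∉ T} → Fin (s-1)) :=
      fun f j => ⟨min (f j.1).val (s-2), by omega⟩ with hdowndef
    have hdown : ∀ (f : Fin n → Fin s), univ.filter (fun j => f j = top) = T →
        ∀ (j : Fin n) (h : j ∉ T), ((down f) ⟨j,h⟩).val = (f j).val := by
      intro f hfib j h
      simp only [hdowndef]
      exact min_eq_left (by have := hfv f hfib j h; omega)
    -- card transfers
    have ccard : ∀ (f : Fin n → Fin s), univ.filter (fun j => f j = top) = T →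
        ∀ (i : ℕ), i ≤ s - 1 →
        (univ.filter fun j : Fin n => (f j).val < i).card
          = (univ.filter fun j : {j : Fin n // j ∉ T} => ((down f) j).val < i).card := by
      intro f hfib i hi
      refine Finset.card_bij (fun a ha => ⟨a, ?_⟩) ?_ ?_ ?_
      · intro hT
        simp only [Finset.mem_filter] at ha
        have h2 := (hmem f hfib a).mpr hT
        have h3 : (f a).val = s - 1 := by rw [h2]
        omega
      · intro a ha
        simp only [Finset.mem_filter, Finset.mem_univ, true_and] at ha ⊢
        exact lt_of_le_of_lt (min_le_left _ _) ha
      · intro a₁ ha₁ a₂ ha₂ h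
        exact congrArg Subtype.val h
      · intro b hb
        simp only [Finset.mem_filter, Finset.mem_univ, true_and] at hb ⊢
        refine ⟨b.1, ?_, Subtype.ext rfl⟩
        have hv := hfv f hfib b.1 b.2
        simp only [hdowndef] at hb
        rwa [min_eq_left (by omega)] at hb
    have cones : ∀ (f : Fin n → Fin s), univ.filter (fun j => f j = top) = T →
        (univ.filter fun j : Fin n => (f j).val = 0).card
          = (univ.filter fun j : {j : Fin n // j ∉ T} => ((down f) j).val = 0).card := by
      intro f hfib
      refine Finset.card_bij (fun a ha => ⟨a, ?_⟩) ?_ ?_ ?_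
      · intro hT
        simp only [Finset.mem_filter] at ha
        have h2 := (hmem f hfib a).mpr hT
        have h3 : (f a).val = s - 1 := by rw [h2]
        omega
      · intro a ha
        simp only [Finset.mem_filter, Finset.mem_univ, true_and] at ha ⊢
        simp [hdowndef, ha]
      · intro a₁ ha₁ a₂ ha₂ h
        exact congrArg Subtype.val h
      · intro b hb
        simp only [Finset.mem_filter, Finset.mem_univ, true_and] at hb ⊢
        refine ⟨b.1, ?_, Subtype.ext rfl⟩
        have hv := hfv f hfib b.1 b.2
        simp only [hdowndef] at hb
        rwa [min_eq_left (by omega)] at hb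
    have cfull : ∀ (f : Fin n → Fin s), ∀ (i : ℕ), s - 1 ≤ i →
        (univ.filter fun j : {j : Fin n // j ∉ T} => ((down f) j).val < i) = univ := by
      intro f i hi
      refine Finset.filter_true_of_mem fun j _ => ?_
      have : ((down f) j).val ≤ s - 2 := by
        simp only [hdowndef]
        exact min_le_right _ _
      omega
    have ffull : ∀ (f : Fin n → Fin s), ∀ (i : ℕ), s ≤ i →
        (univ.filter fun j : Fin n => (f j).val < i) = univ := by
      intro f i hi
      refine Finset.filter_true_of_mem fun j _ => ?_
      have := (f j).isLt
      omega
    by_cases hc : T.card ≤ n - s + 1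
    · rw [if_pos hc, G]
      -- the condition transfer
      have condIff : ∀ (f : Fin n → Fin s), univ.filter (fun j => f j = top) = T →
          ((∀ i ∈ Finset.Icc 1 (Fintype.card (Fin n)), i ≤ (Finset.univ.filter (fun j => (f j).val < i)).card)
          ↔ (∀ i ∈ Finset.Icc 1 (Fintype.card {j : Fin n // j ∉ T}),
              i ≤ (Finset.univ.filter (fun j => ((down f) j).val < i)).card)) := by
        intro f hfib
        rw [hβcard T]
        simp only [Fintype.card_fin, Finset.mem_Icc]
        constructor
        · intro hA i hi
          rcases le_or_gt i (s-1) with hle | hgt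
          · rw [← ccard f hfib i hle]
            exact hA i ⟨hi.1, by omega⟩
          · rw [cfull f i (by omega), Finset.card_univ, hβcard T]
            exact hi.2
        · intro hB i hi
          rcases le_or_gt i (s-1) with hle | hgt
          · rw [ccard f hfib i hle]
            exact hB i ⟨hi.1, by omega⟩
          · rw [ffull f i (by omega), Finset.card_univ, Fintype.card_fin]
            exact hi.2
      refine Finset.sum_nbij' (i := down)
        (j := fun g j => if h : j ∈ T then top else ⟨(g ⟨j, h⟩).val, by have := (g ⟨j, h⟩).isLt; omega⟩)
        ?_ ?_ ?_ ?_ ?_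
      · intro f hf
        exact Finset.mem_univ _
      · intro g hg
        simp only [Finset.mem_filter, Finset.mem_univ, true_and]
        ext j
        simp only [Finset.mem_filter, Finset.mem_univ, true_and]
        constructor
        · intro h
          by_contra hT
          rw [dif_neg hT] at h
          have := congrArg Fin.val h
          simp only [htop] at this
          have hlt := (g ⟨j, hT⟩).isLt
          omega
        · intro h
          rw [dif_pos h]
      · intro f hf
        simp only [Finset.mem_filter, Finset.mem_univ, true_and] at hf
        funext j
        by_cases hT : j ∈ T
        · simp only [dif_pos hT]
          exact ((hmem f hf j).mpr hT).symm
        · simp only [dif_neg hT]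
          exact Fin.ext (hdown f hf j hT)
      · intro g hg
        funext j
        have h1 : j.1 ∉ T := j.2
        refine Fin.ext ?_
        simp only [hdowndef, dif_neg h1]
        have hlt := (g j).isLt
        exact min_eq_left (by omega)
      · intro f hf
        simp only [Finset.mem_filter, Finset.mem_univ, true_and] at hf
        simp only [condIff f hf, cones f hf]
        congr
    · rw [if_neg hc]
      refine Finset.sum_eq_zero fun f hf => ?_
      simp only [Finset.mem_filter, Finset.mem_univ, true_and] at hf
      rw [if_neg]
      intro hA
      have h1 := hA (s-1) (by simp only [Finset.mem_Icc, Fintype.card_fin]; omega)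
      rw [ccard f hf (s-1) le_rfl, cfull f (s-1) le_rfl, Finset.card_univ, hβcard T] at h1
      omega
  -- assemble: fiberwise decomposition
  rw [G, ← Finset.sum_fiberwise univ (fun f : Fin n → Fin s => univ.filter (fun j => f j = top)) _]
  rw [Finset.sum_congr rfl (fun T _ => stepB T)]
  -- now sum over T
  have hG : ∀ T : Finset (Fin n), G {j : Fin n // j ∉ T} (s-1) = G (Fin (n - T.card)) (s-1) :=
    fun T => Gcongr (Fintype.equivFinOfCardEq (hβcard T)) _
  rw [Finset.sum_congr rfl (fun T _ => by rw [hG T])]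
  rw [← Finset.powerset_univ, Finset.sum_powerset]
  have hcu : (univ : Finset (Fin n)).card = n := by rw [Finset.card_univ, Fintype.card_fin]
  rw [hcu]
  have inner2 : ∀ j ∈ range (n+1),
      (∑ T ∈ powersetCard j (univ : Finset (Fin n)),
        if T.card ≤ n - s + 1 then G (Fin (n - T.card)) (s-1) else 0)
      = (n.choose j) • (if j ≤ n - s + 1 then G (Fin (n - j)) (s-1) else 0) := by
    intro j hj
    rw [Finset.sum_congr rfl (fun T hT => ?_), Finset.sum_const, Finset.card_powersetCard, hcu]
    rw [(Finset.mem_powersetCard.mp hT).2]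
  rw [Finset.sum_congr rfl inner2]
  refine ((Finset.sum_subset (Finset.range_subset_range.mpr (by omega)) ?_).symm).trans
    (Finset.sum_congr rfl ?_)
  · intro j hj hnj
    simp only [Finset.mem_range] at hj hnj
    rw [if_neg (by omega)]
    simp
  · intro m hm
    simp only [Finset.mem_range] at hm
    rw [if_pos (by omega), nsmul_eq_mul, map_natCast C]


lemma main_ind : ∀ s n : ℕ, 1 ≤ s → s ≤ n → G (Fin n) s = Rp n s := by
  intro s
  induction s with
  | zero => intro n h1 h2; omega
  | succ s ih =>
    intro n h1 h2
    rcases Nat.eq_zero_or_pos s with rfl | hs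
    · rw [Gbase n, Rp, ← abel0 n (by omega)]
      refine Finset.sum_congr rfl fun i hi => ?_
      rw [show (((0:ℕ)+1:ℕ):ℤ) - (i:ℤ) - 1 = -(i:ℤ) from by push_cast; ring]
    · have hrec := Grec n (s+1) (by omega) h2
      have hR := Rrec n (s+1) (by omega) h2
      simp only [Nat.add_sub_cancel] at hrec hR
      rw [hrec, ← hR]
      refine Finset.sum_congr rfl fun m hm => ?_
      simp only [Finset.mem_range] at hm
      rw [ih (n-m) (by omega) (by omega)]

open Polynomial in
open Classical in
theorem restricted_ones_enumerator_sum (n s : ℕ) (h1 : 1 ≤ s) (h2 : s ≤ n) :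
    ∑ π ∈ Finset.univ.filter
        (fun π : Fin n → Fin s =>
          ∀ i ∈ Finset.Icc 1 n,
            i ≤ (Finset.univ.filter (fun j => (π j).val + 1 ≤ i)).card),
      (X : Polynomial ℤ) ^ (Finset.univ.filter (fun j => (π j).val + 1 = 1)).card
    = ∑ i ∈ Finset.Icc s n,
        C (n.choose i : ℤ) * X * (X + C (i : ℤ)) ^ (i - 1) *
          C (((s : ℤ) - i - 1) ^ (n - i)) := by
  have h := main_ind s n h1 h2
  rw [G] at h
  rw [Finset.sum_filter]
  rw [show (∑ i ∈ Finset.Icc s n,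
        C (n.choose i : ℤ) * X * (X + C (i : ℤ)) ^ (i - 1) *
          C (((s : ℤ) - i - 1) ^ (n - i))) = Rp n s from rfl]
  rw [← h]
  refine Finset.sum_congr rfl fun f _ => ?_
  have e1 : (Finset.univ.filter (fun j => (f j).val + 1 = 1)).card
      = (Finset.univ.filter (fun j => (f j).val = 0)).card := by
    congr 1
    refine Finset.filter_congr fun j _ => by omega
  have e2 : (∀ i ∈ Finset.Icc 1 n, i ≤ (Finset.univ.filter (fun j => (f j).val + 1 ≤ i)).card)
      ↔ (∀ i ∈ Finset.Icc 1 (Fintype.card (Fin n)),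
          i ≤ (Finset.univ.filter (fun j => (f j).val < i)).card) := by
    rw [Fintype.card_fin]
    refine forall₂_congr fun i _ => ?_
    have : (Finset.univ.filter (fun j => (f j).val + 1 ≤ i))
        = (Finset.univ.filter (fun j => (f j).val < i)) :=
      Finset.filter_congr fun j _ => by omega
    rw [this]
  by_cases hP : (∀ i ∈ Finset.Icc 1 n, i ≤ (Finset.univ.filter (fun j => (f j).val + 1 ≤ i)).card)
  · rw [if_pos hP, if_pos (e2.mp hP), e1]
  · rw [if_neg hP, if_neg (fun hq => hP (e2.mpr hq))]
end

section
/- For 1 ≤ s ≤ n, the number of nondecreasing [s]-restricted parking functions on n cars equals the Catalan triangle entry C(n, s−1), where C(n,k) = (n−k+1)/(n+1) · binom(n+k, k). -/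
/-- A nondecreasing `[s]`-restricted parking function on `n` cars:
nondecreasing `π : [n] → [s]` with `π(i) ≤ i` (car `j : Fin n` is the
`(j+1)`-st car). -/
def IsNDRPF (n s : ℕ) (π : Fin n → ℕ) : Prop :=
  Monotone π ∧ (∀ j, π j ∈ Finset.Icc 1 s) ∧ ∀ j : Fin n, π j ≤ j.val + 1

open Classical in
noncomputable def NDA (n s : ℕ) : Finset (Fin n → ℕ) :=
  (Fintype.piFinset fun _ : Fin n => Finset.Icc 1 s).filter
    (fun π => Monotone π ∧ ∀ j : Fin n, π j ≤ j.1 + 1)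

lemma mem_NDA {n s : ℕ} {π : Fin n → ℕ} : π ∈ NDA n s ↔ IsNDRPF n s π := by
  classical
  simp [NDA, IsNDRPF, Fintype.mem_piFinset, Finset.mem_filter]
  tauto

-- Catalan triangle
def ctri : ℕ → ℕ → ℕ
  | _, 0 => 1
  | 0, _+1 => 1
  | n+1, k+1 => (if k + 1 ≤ n then ctri n (k+1) else 0) + ctri (n+1) k

lemma NDA_stab (m s : ℕ) (hs : m ≤ s) : NDA m s = NDA m m := by
  classical
  ext π
  simp only [NDA, Finset.mem_filter, Fintype.mem_piFinset, Finset.mem_Icc]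
  constructor
  · rintro ⟨h1, h2, h3⟩
    refine ⟨fun j => ⟨(h1 j).1, ?_⟩, h2, h3⟩
    exact le_trans (h3 j) j.isLt
  · rintro ⟨h1, h2, h3⟩
    exact ⟨fun j => ⟨(h1 j).1, le_trans (h1 j).2 hs⟩, h2, h3⟩

lemma mono_snoc {n : ℕ} {f : Fin n → ℕ} {a : ℕ} (hf : Monotone f)
    (ha : ∀ i, f i ≤ a) : Monotone (Fin.snoc f a) := by
  intro i j hij
  induction j using Fin.lastCases with
  | last =>
    induction i using Fin.lastCases with
    | last => exact le_refl _
    | cast i => simpa [Fin.snoc_castSucc, Fin.snoc_last] using ha i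
  | cast j =>
    induction i using Fin.lastCases with
    | last => exact absurd hij (not_le.mpr (Fin.castSucc_lt_last j))
    | cast i =>
      simp only [Fin.snoc_castSucc]
      exact hf (Fin.castSucc_le_castSucc_iff.mp hij)

lemma NDA_rec (n s : ℕ) (h2 : 2 ≤ s) (hs : s ≤ n + 1) :
    (NDA (n+1) s).card = (NDA n s).card + (NDA (n+1) (s-1)).card := by
  classical
  have part1 : ((NDA (n+1) s).filter (fun π => π (Fin.last n) = s)).card
      = (NDA n s).card := by
    refine Finset.card_nbij' (fun π => fun j : Fin n => π j.castSucc)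
      (fun f => Fin.snoc f s) ?_ ?_ ?_ ?_
    · intro π hπ
      rw [Finset.mem_coe, Finset.mem_filter] at hπ
      obtain ⟨hπ, hlast⟩ := hπ
      rw [mem_NDA] at hπ
      show (fun j : Fin n => π j.castSucc) ∈ NDA n s
      rw [mem_NDA]
      obtain ⟨hm, hicc, hb⟩ := hπ
      exact ⟨fun a b hab => hm (Fin.castSucc_le_castSucc_iff.mpr hab),
        fun j => hicc _, fun j => by simpa using hb j.castSucc⟩
    · intro f hf
      rw [Finset.mem_coe, mem_NDA] at hf
      obtain ⟨hm, hicc, hb⟩ := hf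
      rw [Finset.mem_coe, Finset.mem_filter]
      refine ⟨?_, by simp [Fin.snoc_last]⟩
      rw [mem_NDA]
      refine ⟨mono_snoc hm (fun i => (Finset.mem_Icc.mp (hicc i)).2), ?_, ?_⟩
      · intro j
        induction j using Fin.lastCases with
        | last => simp only [Fin.snoc_last]; exact Finset.mem_Icc.mpr ⟨by omega, le_refl s⟩
        | cast i => simpa [Fin.snoc_castSucc] using hicc i
      · intro j
        induction j using Fin.lastCases with
        | last => simp only [Fin.snoc_last, Fin.val_last]; omega
        | cast i => simpa [Fin.snoc_castSucc] using hb i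
    · intro π hπ
      rw [Finset.mem_coe, Finset.mem_filter] at hπ
      funext j
      induction j using Fin.lastCases with
      | last => simp [Fin.snoc_last, hπ.2]
      | cast i => simp [Fin.snoc_castSucc]
    · intro f hf
      funext j
      simp [Fin.snoc_castSucc]
  have part2 : (NDA (n+1) s).filter (fun π => ¬ π (Fin.last n) = s)
      = NDA (n+1) (s-1) := by
    clear part1
    ext π
    rw [Finset.mem_filter, mem_NDA, mem_NDA]
    constructor
    · rintro ⟨⟨hm, hicc, hb⟩, hne⟩
      refine ⟨hm, fun j => ?_, hb⟩
      have h1 := Finset.mem_Icc.mp (hicc j)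
      have h2' := Finset.mem_Icc.mp (hicc (Fin.last n))
      have h3 := hm (Fin.le_last j)
      rw [Finset.mem_Icc]
      omega
    · rintro ⟨hm, hicc, hb⟩
      have hlt : ∀ j, π j ≤ s - 1 := fun j => (Finset.mem_Icc.mp (hicc j)).2
      refine ⟨⟨hm, fun j => ?_, hb⟩, ?_⟩
      · have := Finset.mem_Icc.mp (hicc j); rw [Finset.mem_Icc]; omega
      · have := hlt (Fin.last n); omega
  have hsplit := Finset.card_filter_add_card_filter_not
    (s := NDA (n+1) s) (p := fun π => π (Fin.last n) = s)
  rw [part1, part2] at hsplit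
  clear part1 part2
  omega

lemma NDA_card_one (n : ℕ) : (NDA n 1).card = 1 := by
  classical
  have : NDA n 1 = {fun _ => 1} := by
    ext π
    simp only [NDA, Finset.mem_filter, Fintype.mem_piFinset, Finset.mem_Icc,
      Finset.mem_singleton]
    constructor
    · rintro ⟨h1, _, _⟩
      funext j
      have := h1 j; omega
    · rintro rfl
      exact ⟨fun j => ⟨le_refl 1, le_refl 1⟩, monotone_const, fun j => by simp⟩
  rw [this, Finset.card_singleton]

lemma NDA_zero (s : ℕ) : (NDA 0 s).card = 1 := by
  classical
  have : NDA 0 s = {fun j => j.elim0} := by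
    ext π
    simp only [NDA, Finset.mem_filter, Fintype.mem_piFinset, Finset.mem_singleton]
    constructor
    · intro _
      funext j; exact j.elim0
    · rintro rfl
      exact ⟨fun j => j.elim0, fun i => i.elim0, fun j => j.elim0⟩
  rw [this, Finset.card_singleton]

lemma cardNDA : ∀ n k, (NDA n (k+1)).card = ctri n k := by
  intro n
  induction n with
  | zero =>
    intro k
    rw [NDA_zero]
    cases k <;> simp [ctri]
  | succ n ih =>
    intro k
    induction k with
    | zero => rw [NDA_card_one]; simp [ctri]
    | succ k ihk =>
      by_cases hkn : k + 1 ≤ n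
      · have hrec := NDA_rec n (k+2) (by omega) (by omega)
        have e : k + 2 - 1 = k + 1 := rfl
        rw [e] at hrec
        rw [hrec, ih (k+1), ihk]
        simp [ctri, hkn]
      · have e1 : NDA (n+1) (k+2) = NDA (n+1) (n+1) := NDA_stab (n+1) (k+2) (by omega)
        have e2 : NDA (n+1) (k+1) = NDA (n+1) (n+1) := NDA_stab (n+1) (k+1) (by omega)
        rw [e1, ← e2, ihk]
        simp [ctri, hkn]

lemma cform (n : ℕ) : ∀ k ≤ n, ctri n k * (n+1) = (n - k + 1) * (n+k).choose k := by
  induction n with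
  | zero =>
    intro k hk
    interval_cases k
    simp [ctri]
  | succ n ih =>
    intro k hk
    induction k with
    | zero => simp [ctri]
    | succ k ihk =>
      have h2 := ihk (by omega)
      by_cases hkn : k + 1 ≤ n
      · have h1 := ih (k+1) hkn
        obtain ⟨m, rfl⟩ : ∃ m, n = k + 1 + m := ⟨n - (k+1), by omega⟩
        have e1 : k + 1 + m - (k + 1) + 1 = m + 1 := by omega
        rw [e1] at h1
        have e2 : k + 1 + m + 1 - k + 1 = m + 3 := by omega
        rw [e2] at h2
        have eM1 : k + 1 + m + (k + 1) = 2*k + m + 2 := by omega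
        rw [eM1] at h1
        have eM2 : k + 1 + m + 1 + k = 2*k + m + 2 := by omega
        rw [eM2] at h2
        have pascal : (2*k + m + 3).choose (k+1)
            = (2*k + m + 2).choose k + (2*k + m + 2).choose (k+1) :=
          Nat.choose_succ_succ (2*k + m + 2) k
        have key : (2*k + m + 2).choose (k+1) * (k+1)
            = (2*k + m + 2).choose k * (k + m + 2) := by
          have := Nat.choose_succ_right_eq (2*k + m + 2) k
          have e : 2*k + m + 2 - k = k + m + 2 := by omega
          rwa [e] at this
        have unfold : ctri (k+1+m+1) (k+1)
            = ctri (k+1+m) (k+1) + ctri (k+1+m+1) k := by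
          simp [ctri, hkn]
        rw [unfold]
        have e3 : k + 1 + m + 1 - (k + 1) + 1 = m + 2 := by omega
        rw [e3]
        have e4 : k + 1 + m + 1 + (k + 1) = 2*k + m + 3 := by omega
        rw [e4]
        apply Nat.eq_of_mul_eq_mul_right (show 0 < k + 1 + m + 1 by omega)
        zify at h1 h2 key pascal ⊢
        linear_combination (k + m + 3 : ℤ) * h1 + (k + m + 2 : ℤ) * h2
          - ((m : ℤ) + 2) * ((k : ℤ) + m + 2) * pascal - key
      · have hk' : k = n := by omega
        subst hk'
        have unfold : ctri (k+1) (k+1) = ctri (k+1) k := by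
          simp [ctri, hkn]
        rw [unfold]
        have e1 : k + 1 - k + 1 = 2 := by omega
        rw [e1] at h2
        have e2 : k + 1 - (k + 1) + 1 = 1 := by omega
        rw [e2]
        have e3 : k + 1 + (k + 1) = (k + 1 + k) + 1 := by omega
        rw [e3]
        have pascal : (k + 1 + k + 1).choose (k+1)
            = (k + 1 + k).choose k + (k + 1 + k).choose (k+1) :=
          Nat.choose_succ_succ (k + 1 + k) k
        have symm : (k + 1 + k).choose (k+1) = (k + 1 + k).choose k := by
          have := Nat.choose_symm (show k + 1 ≤ k + 1 + k by omega)
          have e : k + 1 + k - (k + 1) = k := by omega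
          rw [e] at this
          exact this.symm
        rw [h2, pascal, symm]
        ring

/-- `#PF↑_{n|[s]} = C(n, s-1)` where `C(n,k) = (n-k+1)·binom(n+k,k)/(n+1)`,
stated with the division cleared. -/
theorem count_nondecreasing_restricted (n s : ℕ) (h1 : 1 ≤ s) (h2 : s ≤ n) :
    {π : Fin n → ℕ | IsNDRPF n s π}.ncard * (n + 1) =
      (n - (s - 1) + 1) * (n + (s - 1)).choose (s - 1) := by
  have hset : {π : Fin n → ℕ | IsNDRPF n s π} = ↑(NDA n s) := by
    ext π; simp [mem_NDA]
  rw [hset, Set.ncard_coe_finset]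
  obtain ⟨k, rfl⟩ : ∃ k, s = k + 1 := ⟨s - 1, by omega⟩
  simp only [Nat.add_sub_cancel]
  rw [cardNDA]
  exact cform n k (by omega)
end

section
/- The counts of nondecreasing restricted parking functions satisfy the recurrence #PF↑_{n|[s]} = #PF↑_{n−1|[s]} + #PF↑_{n|[s−1]} for 2 ≤ s ≤ n, with #PF↑_{n|[1]} = 1 for all n ≥ 1. -/
/-- The number of nondecreasing `[s]`-restricted parking functions on `n` cars. -/
noncomputable def ndCount (n s : ℕ) : ℕ := {π : Fin n → ℕ | IsNDRPF n s π}.ncard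

lemma ndrpf_finite (n s : ℕ) : {π : Fin n → ℕ | IsNDRPF n s π}.Finite := by
  apply Set.Finite.subset (Set.Finite.pi (fun _ : Fin n => Set.finite_Icc 1 s))
  intro π h
  simp only [Set.mem_pi, Set.mem_univ, forall_true_left]
  intro j
  have := h.2.1 j
  simpa [Set.mem_Icc, Finset.mem_Icc] using this

lemma ndrpf_base (n : ℕ) (_hn : 1 ≤ n) : ndCount n 1 = 1 := by
  have : {π : Fin n → ℕ | IsNDRPF n 1 π} = {fun _ => 1} := by
    ext π
    constructor
    · rintro ⟨_, h2, _⟩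
      funext j
      have := h2 j
      simp only [Finset.mem_Icc] at this
      omega
    · rintro rfl
      refine ⟨monotone_const, fun j => ?_, fun j => ?_⟩ <;> simp
  rw [ndCount, this, Set.ncard_singleton]

theorem nondecreasing_recurrence :
    (∀ n s : ℕ, 2 ≤ s → s ≤ n →
      ndCount n s = ndCount (n - 1) s + ndCount n (s - 1)) ∧
    (∀ n : ℕ, 1 ≤ n → ndCount n 1 = 1) := by
  constructor
  · intro n s hs hsn
    obtain ⟨m, rfl⟩ : ∃ m, n = m + 1 := ⟨n - 1, by omega⟩
    simp only [Nat.add_sub_cancel]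
    set A := {π : Fin (m+1) → ℕ | IsNDRPF (m+1) s π}
    set B := {π : Fin (m+1) → ℕ | IsNDRPF (m+1) s π ∧ π (Fin.last m) = s}
    set C := {π : Fin (m+1) → ℕ | IsNDRPF (m+1) (s-1) π}
    have hCsub : C ⊆ A := by
      rintro π ⟨h1, h2, h3⟩
      refine ⟨h1, fun j => ?_, h3⟩
      have := h2 j
      simp only [Finset.mem_Icc] at this ⊢
      omega
    have hABC : A = B ∪ C := by
      ext π
      constructor
      · rintro ⟨h1, h2, h3⟩
        rcases eq_or_lt_of_le ((Finset.mem_Icc.mp (h2 (Fin.last m))).2) with heq | hlt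
        · exact Or.inl ⟨⟨h1, h2, h3⟩, heq⟩
        · refine Or.inr ⟨h1, fun j => ?_, h3⟩
          have hle : π j ≤ π (Fin.last m) := h1 (Fin.le_last j)
          have := h2 j
          simp only [Finset.mem_Icc] at this ⊢
          omega
      · rintro (⟨h, _⟩ | h)
        · exact h
        · exact hCsub h
    have hdisj : Disjoint B C := by
      rw [Set.disjoint_left]
      rintro π ⟨h, hlast⟩ hc
      have := hc.2.1 (Fin.last m)
      simp only [Finset.mem_Icc] at this
      omega
    -- B is in bijection with NDRPF on m cars
    have hBcard : B.ncard = ndCount m s := by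
      rw [ndCount]
      have himg : (fun π : Fin (m+1) → ℕ => π ∘ Fin.castSucc) '' B
          = {π : Fin m → ℕ | IsNDRPF m s π} := by
        ext π'
        constructor
        · rintro ⟨π, ⟨⟨h1, h2, h3⟩, _⟩, rfl⟩
          refine ⟨h1.comp Fin.strictMono_castSucc.monotone, fun j => h2 _, fun j => ?_⟩
          simpa using h3 (Fin.castSucc j)
        · rintro ⟨h1, h2, h3⟩
          refine ⟨Fin.snoc π' s, ⟨⟨?_, ?_, ?_⟩, Fin.snoc_last _ _⟩, ?_⟩
          · rw [Fin.monotone_iff_le_succ]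
            intro i
            rw [Fin.snoc_castSucc]
            rcases eq_or_lt_of_le (Nat.succ_le_of_lt i.isLt) with heq | hlt
            · have : i.succ = Fin.last m := by
                ext; simpa using heq
              rw [this, Fin.snoc_last]
              exact (Finset.mem_Icc.mp (h2 i)).2
            · have : i.succ = Fin.castSucc ⟨i.val + 1, hlt⟩ := by
                ext; simp
              rw [this, Fin.snoc_castSucc]
              exact h1 (by simp [Fin.le_def])
          · intro j
            induction j using Fin.lastCases with
            | last => rw [Fin.snoc_last]; exact Finset.mem_Icc.mpr ⟨by omega, le_rfl⟩
            | cast i => rw [Fin.snoc_castSucc]; exact h2 i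
          · intro j
            induction j using Fin.lastCases with
            | last => rw [Fin.snoc_last]; simp; omega
            | cast i =>
              rw [Fin.snoc_castSucc]
              simpa using h3 i
          · funext i
            simp [Fin.snoc_castSucc]
      rw [← himg]
      refine (Set.ncard_image_of_injOn ?_).symm
      rintro π ⟨_, hπ⟩ σ ⟨_, hσ⟩ h
      funext j
      induction j using Fin.lastCases with
      | last => rw [hπ, hσ]
      | cast i => exact congrFun h i
    have hCcard : C.ncard = ndCount (m+1) (s-1) := rfl
    have hA : ndCount (m+1) s = A.ncard := rfl
    rw [hA, hABC, Set.ncard_union_eq hdisj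
      ((ndrpf_finite (m+1) s).subset (fun π h => h.1))
      ((ndrpf_finite (m+1) s).subset hCsub), hBcard, hCcard]
  · exact ndrpf_base
end

section
/- The number of nondecreasing parking functions on n cars whose maximum value is exactly s equals the Catalan triangle entry C(n−1, s−1). -/
open Finset

open Classical in
noncomputable def NDP (n s : ℕ) : Finset (Fin n → ℕ) :=
  (Fintype.piFinset fun _ : Fin n => Finset.Icc 1 s).filter
    (fun π => Monotone π ∧ (∀ j : Fin n, π j ≤ j.val + 1) ∧ ∃ j, π j = s)

lemma mem_NDP {n s : ℕ} {π : Fin n → ℕ} :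
    π ∈ NDP n s ↔ (∀ j, 1 ≤ π j ∧ π j ≤ s) ∧ Monotone π ∧
      (∀ j : Fin n, π j ≤ j.val + 1) ∧ ∃ j, π j = s := by
  simp [NDP, Fintype.mem_piFinset, Finset.mem_Icc]

lemma last_NDP {m s : ℕ} {π : Fin (m+1) → ℕ} (h : π ∈ NDP (m+1) s) :
    π (Fin.last m) = s := by
  obtain ⟨hb, hm, -, j, hj⟩ := mem_NDP.1 h
  have h1 := hm (Fin.le_last j)
  have h2 := (hb (Fin.last m)).2
  omega

lemma ne_last_le {m : ℕ} {j : Fin (m+2)} (hj : j ≠ Fin.last (m+1)) :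
    j ≤ Fin.castSucc (Fin.last m) := by
  have h1 : j.val ≠ m + 1 := fun h => hj (Fin.ext (by simpa using h))
  have h2 := j.isLt
  rw [Fin.le_def]
  simpa using by omega

lemma NDP_rest_card (m k : ℕ) (hk : k ≤ m) :
    ((NDP (m+2) (k+2)).filter (fun π => π (Fin.castSucc (Fin.last m)) ≠ k+2)).card
      = (NDP (m+2) (k+1)).card := by
  have hne : Fin.castSucc (Fin.last m) ≠ Fin.last (m+1) :=
    Fin.ne_of_lt (Fin.castSucc_lt_last _)
  apply Finset.card_bij (fun π _ => Function.update π (Fin.last (m+1)) (k+1))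
  · intro π hπ
    rw [Finset.mem_filter] at hπ
    obtain ⟨hmem, hnee⟩ := hπ
    obtain ⟨hb, hm, hub, -⟩ := mem_NDP.1 hmem
    have hsl : ∀ j : Fin (m+2), j ≠ Fin.last (m+1) → π j ≤ k+1 := by
      intro j hj
      have h1 : π j ≤ π (Fin.castSucc (Fin.last m)) := hm (ne_last_le hj)
      have h2 := (hb (Fin.castSucc (Fin.last m))).2
      omega
    rw [mem_NDP]
    refine ⟨?_, ?_, ?_, ⟨Fin.last (m+1), Function.update_self _ _ _⟩⟩
    · intro j
      by_cases hj : j = Fin.last (m+1)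
      · subst hj; rw [Function.update_self]; omega
      · rw [Function.update_of_ne hj]
        exact ⟨(hb j).1, hsl j hj⟩
    · intro a b hab
      by_cases hbl : b = Fin.last (m+1)
      · subst hbl; rw [Function.update_self]
        by_cases hal : a = Fin.last (m+1)
        · subst hal; rw [Function.update_self]
        · rw [Function.update_of_ne hal]; exact hsl a hal
      · have hal : a ≠ Fin.last (m+1) := by
          intro h; subst h; exact hbl (le_antisymm (Fin.le_last b) hab)
        rw [Function.update_of_ne hal, Function.update_of_ne hbl]
        exact hm hab
    · intro j
      by_cases hj : j = Fin.last (m+1)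
      · subst hj; rw [Function.update_self]; simp [Fin.val_last]; omega
      · rw [Function.update_of_ne hj]; exact hub j
  · intro π hπ ρ hρ h
    rw [Finset.mem_filter] at hπ hρ
    have hπl := last_NDP hπ.1
    have hρl := last_NDP hρ.1
    funext j
    by_cases hj : j = Fin.last (m+1)
    · subst hj; rw [hπl, hρl]
    · have := congrFun h j
      rwa [Function.update_of_ne hj, Function.update_of_ne hj] at this
  · intro ρ hρ
    obtain ⟨hb, hm, hub, -⟩ := mem_NDP.1 hρ
    have hρl := last_NDP hρ
    refine ⟨Function.update ρ (Fin.last (m+1)) (k+2), ?_, ?_⟩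
    · rw [Finset.mem_filter]
      constructor
      · rw [mem_NDP]
        refine ⟨?_, ?_, ?_, ⟨Fin.last (m+1), Function.update_self _ _ _⟩⟩
        · intro j
          by_cases hj : j = Fin.last (m+1)
          · subst hj; rw [Function.update_self]; omega
          · rw [Function.update_of_ne hj]
            have := hb j; omega
        · intro a b hab
          by_cases hbl : b = Fin.last (m+1)
          · subst hbl; rw [Function.update_self]
            by_cases hal : a = Fin.last (m+1)
            · subst hal; rw [Function.update_self]
            · rw [Function.update_of_ne hal]
              have := (hb a).2; omega
          · have hal : a ≠ Fin.last (m+1) := by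
              intro h; subst h; exact hbl (le_antisymm (Fin.le_last b) hab)
            rw [Function.update_of_ne hal, Function.update_of_ne hbl]
            exact hm hab
        · intro j
          by_cases hj : j = Fin.last (m+1)
          · subst hj; rw [Function.update_self]; simp [Fin.val_last]; omega
          · rw [Function.update_of_ne hj]; exact hub j
      · rw [Function.update_of_ne hne]
        have := (hb (Fin.castSucc (Fin.last m))).2
        omega
    · rw [Function.update_idem]
      rw [← hρl]
      exact Function.update_eq_self _ _

lemma NDP_one (m : ℕ) : (NDP (m+1) 1).card = 1 := by
  have : NDP (m+1) 1 = {fun _ => 1} := by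
    ext π
    simp only [Finset.mem_singleton, mem_NDP]
    constructor
    · rintro ⟨hb, -, -, -⟩
      funext j
      have := hb j; omega
    · rintro rfl
      exact ⟨fun j => ⟨le_refl _, le_refl _⟩, monotone_const, fun j => Nat.le_add_left 1 _, ⟨0, rfl⟩⟩
  rw [this, Finset.card_singleton]

lemma NDP_top_card (m s : ℕ) (hs : 1 ≤ s) (hsm : s ≤ m + 1) :
    ((NDP (m+2) s).filter (fun π => π (Fin.castSucc (Fin.last m)) = s)).card
      = (NDP (m+1) s).card := by
  apply Finset.card_bij (fun π _ => fun j : Fin (m+1) => π (Fin.castSucc j))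
  · intro π hπ
    rw [Finset.mem_filter] at hπ
    obtain ⟨hmem, htop⟩ := hπ
    obtain ⟨hb, hm, hub, -⟩ := mem_NDP.1 hmem
    rw [mem_NDP]
    refine ⟨fun j => hb _, fun a b hab => hm (Fin.castSucc_le_castSucc_iff.mpr hab),
      fun j => by simpa using hub (Fin.castSucc j), ⟨Fin.last m, htop⟩⟩
  · intro π hπ ρ hρ h
    rw [Finset.mem_filter] at hπ hρ
    funext j
    by_cases hj : j = Fin.last (m+1)
    · subst hj; rw [last_NDP hπ.1, last_NDP hρ.1]
    · obtain ⟨j', rfl⟩ := Fin.exists_castSucc_eq.mpr hj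
      exact congrFun h j'
  · intro ρ hρ
    obtain ⟨hb, hm, hub, -⟩ := mem_NDP.1 hρ
    have hρl := last_NDP hρ
    refine ⟨Fin.snoc ρ s, ?_, ?_⟩
    · rw [Finset.mem_filter]
      refine ⟨mem_NDP.2 ⟨?_, ?_, ?_, ⟨Fin.last (m+1), Fin.snoc_last _ _⟩⟩, ?_⟩
      · intro j
        by_cases hj : j = Fin.last (m+1)
        · subst hj; rw [Fin.snoc_last]; omega
        · obtain ⟨j', rfl⟩ := Fin.exists_castSucc_eq.mpr hj
          rw [Fin.snoc_castSucc]; exact hb j'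
      · intro a b hab
        by_cases hbl : b = Fin.last (m+1)
        · subst hbl; rw [Fin.snoc_last]
          by_cases hal : a = Fin.last (m+1)
          · subst hal; rw [Fin.snoc_last]
          · obtain ⟨a', rfl⟩ := Fin.exists_castSucc_eq.mpr hal
            rw [Fin.snoc_castSucc]; exact (hb a').2
        · obtain ⟨b', rfl⟩ := Fin.exists_castSucc_eq.mpr hbl
          have hal : a ≠ Fin.last (m+1) := by
            intro h; subst h
            exact hbl (le_antisymm (Fin.le_last _) hab)
          obtain ⟨a', rfl⟩ := Fin.exists_castSucc_eq.mpr hal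
          rw [Fin.snoc_castSucc, Fin.snoc_castSucc]
          exact hm (Fin.castSucc_le_castSucc_iff.mp hab)
      · intro j
        by_cases hj : j = Fin.last (m+1)
        · subst hj; rw [Fin.snoc_last]; simp [Fin.val_last]; omega
        · obtain ⟨j', rfl⟩ := Fin.exists_castSucc_eq.mpr hj
          rw [Fin.snoc_castSucc]; simpa using hub j'
      · rw [Fin.snoc_castSucc, hρl]
    · funext j; rw [Fin.snoc_castSucc]

lemma NDP_top_empty (m : ℕ) :
    ((NDP (m+2) (m+2)).filter (fun π => π (Fin.castSucc (Fin.last m)) = m+2)).card = 0 := by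
  rw [Finset.card_eq_zero, Finset.filter_eq_empty_iff]
  intro π hπ
  obtain ⟨-, -, hub, -⟩ := mem_NDP.1 hπ
  have := hub (Fin.castSucc (Fin.last m))
  simp only [Fin.coe_castSucc, Fin.val_last] at this
  omega

lemma NDP_split (m k : ℕ) :
    (NDP (m+2) (k+2)).card
      = ((NDP (m+2) (k+2)).filter (fun π => π (Fin.castSucc (Fin.last m)) = k+2)).card
        + ((NDP (m+2) (k+2)).filter (fun π => π (Fin.castSucc (Fin.last m)) ≠ k+2)).card := by
  classical
  exact (Finset.card_filter_add_card_filter_not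
    (p := fun π : Fin (m+2) → ℕ => π (Fin.castSucc (Fin.last m)) = k+2)).symm

lemma NDP_rec (m k : ℕ) (hk : k + 1 ≤ m) :
    (NDP (m+2) (k+2)).card = (NDP (m+1) (k+2)).card + (NDP (m+2) (k+1)).card := by
  rw [NDP_split, NDP_top_card m (k+2) (by omega) (by omega), NDP_rest_card m k (by omega)]

lemma NDP_diag (m : ℕ) :
    (NDP (m+2) (m+2)).card = (NDP (m+2) (m+1)).card := by
  rw [NDP_split, NDP_top_empty, NDP_rest_card m m le_rfl, Nat.zero_add]


lemma K_aux : ∀ t m k, m + k ≤ t → k ≤ m →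
    (NDP (m+1) (k+1)).card + (m+k).choose (m+1) = (m+k).choose k := by
  intro t
  induction t with
  | zero =>
    intro m k h hk
    have hm : m = 0 := by omega
    have hk0 : k = 0 := by omega
    subst hm; subst hk0
    simp [NDP_one]
  | succ t IH =>
    intro m k h hk
    match k, hk with
    | 0, _ => simp [NDP_one, Nat.choose_eq_zero_of_lt (by omega : m < m+1)]
    | (k'+1), hk =>
      obtain ⟨m', rfl⟩ : ∃ m', m = m' + 1 := ⟨m - 1, by omega⟩
      by_cases hd : k' + 1 ≤ m'
      · -- generic case
        rw [show m'+1+1 = m'+2 from rfl, show k'+1+1 = k'+2 from rfl, NDP_rec m' k' hd]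
        have IH1 : (NDP (m'+2) (k'+1)).card + (m'+1+k').choose (m'+2) = (m'+1+k').choose k' :=
          IH (m'+1) k' (by omega) (by omega)
        have IH2 : (NDP (m'+1) (k'+2)).card + (m'+(k'+1)).choose (m'+1) = (m'+(k'+1)).choose (k'+1) :=
          IH m' (k'+1) (by omega) (by omega)
        rw [show m'+1+k' = m'+k'+1 from by omega] at IH1
        rw [show m'+(k'+1) = m'+k'+1 from by omega] at IH2
        rw [show m'+1+(k'+1) = (m'+k'+1)+1 from by omega]
        rw [Nat.choose_succ_succ (m'+k'+1) (m'+1), Nat.choose_succ_succ (m'+k'+1) k']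
        simp only [Nat.succ_eq_add_one, show m'+1+1 = m'+2 by omega] at *
        omega
      · -- diagonal case k' = m'
        have : k' = m' := by omega
        subst this
        rw [show k'+1+1 = k'+2 from rfl, NDP_diag k']
        have IH1 : (NDP (k'+2) (k'+1)).card + (k'+1+k').choose (k'+2) = (k'+1+k').choose k' :=
          IH (k'+1) k' (by omega) (by omega)
        rw [show k'+1+k' = k'+k'+1 from by omega] at IH1
        rw [show k'+1+(k'+1) = (k'+k'+1)+1 from by omega]
        rw [Nat.choose_succ_succ (k'+k'+1) (k'+1), Nat.choose_succ_succ (k'+k'+1) k']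
        simp only [Nat.succ_eq_add_one, show k'+1+1 = k'+2 by omega] at *
        omega

/-- A nondecreasing parking function on `n` cars. -/
def IsNDPF (n : ℕ) (π : Fin n → ℕ) : Prop :=
  Monotone π ∧ (∀ j, π j ∈ Finset.Icc 1 n) ∧ ∀ j : Fin n, π j ≤ j.val + 1

/-- The number of nondecreasing parking functions with maximum value exactly `s`
is the Catalan triangle entry `C(n-1, s-1) = (n-s+1)·binom(n+s-2, s-1)/n`,
stated with the division cleared. -/
theorem count_nondecreasing_max (n s : ℕ) (h1 : 1 ≤ s) (h2 : s ≤ n) :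
    {π : Fin n → ℕ | IsNDPF n π ∧ (∀ j, π j ≤ s) ∧ ∃ j, π j = s}.ncard *
        ((n - 1) + 1) =
      ((n - 1) - (s - 1) + 1) * ((n - 1) + (s - 1)).choose (s - 1) := by
  obtain ⟨k, rfl⟩ : ∃ k, s = k + 1 := ⟨s - 1, by omega⟩
  obtain ⟨m, rfl⟩ : ∃ m, n = m + 1 := ⟨n - 1, by omega⟩
  have hk : k ≤ m := by omega
  simp only [Nat.add_sub_cancel]
  have hset : {π : Fin (m+1) → ℕ | IsNDPF (m+1) π ∧ (∀ j, π j ≤ k+1) ∧ ∃ j, π j = k+1}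
      = ↑(NDP (m+1) (k+1)) := by
    ext π
    simp only [Set.mem_setOf_eq, Finset.coe_insert, Finset.mem_coe, mem_NDP, IsNDPF,
      Finset.mem_Icc]
    constructor
    · rintro ⟨⟨hm, hb, hub⟩, hle, hex⟩
      exact ⟨fun j => ⟨(hb j).1, hle j⟩, hm, hub, hex⟩
    · rintro ⟨hb, hm, hub, hex⟩
      exact ⟨⟨hm, fun j => ⟨(hb j).1, le_trans (hb j).2 (by omega)⟩, hub⟩,
        fun j => (hb j).2, hex⟩
  rw [hset, Set.ncard_coe_finset]
  have hK := K_aux (m+k) m k le_rfl hk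
  have h2 : (m+k).choose (m+1) * (m+1) = (m+k).choose k * k := by
    rw [Nat.choose_succ_right_eq]
    congr 1
    · rw [← Nat.choose_symm (by omega : k ≤ m + k)]
      congr 1
      omega
    · omega
  have e2 : (NDP (m+1) (k+1)).card * (m+1) + (m+k).choose (m+1) * (m+1)
      = (m+k).choose k * (m+1) := by rw [← Nat.add_mul, hK]
  have e1 : (m+k).choose k * (m+1) = (m+k).choose k * (m+1-k) + (m+k).choose k * k := by
    rw [← Nat.mul_add]
    congr 1
    omega
  have hgoal : (m - k + 1) = (m + 1 - k) := by omega
  rw [hgoal, Nat.mul_comm (m+1-k)]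
  linarith [e1, e2, h2]
end

section
/- For 1 ≤ s ≤ n and a permutation σ of [n], the number of [s]-restricted parking functions on n cars whose parking outcome is σ equals Π_{i=1}^{n} max{0, ℓ_{n,i}(σ) − max{0, i−s}}, where ℓ_{n,i}(σ) is the length of the longest contiguous suffix σ_j σ_{j+1} … σ_i of the one-line notation of σ ending at position i whose maximum entry is σ_i. -/
/-- `outcomeMap n π t` is the (1-indexed) number of the car that ends up parked
in spot `t` under the parking procedure on `n` spots (or `0` if `t` stays empty):
cars enter in order; each drives to its preferred spot and parks in the first
empty spot at or after it. -/
def outcomeMap (n : ℕ) (π : Fin n → ℕ) : ℕ → ℕ :=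
  (List.finRange n).foldl
    (fun m j =>
      if h : ((Finset.Icc (π j) n).filter (fun t => m t = 0)).Nonempty then
        Function.update m (((Finset.Icc (π j) n).filter (fun t => m t = 0)).min' h)
          (j.val + 1)
      else m)
    (fun _ => 0)

/-- `ℓ_{n,i}(σ)`: the length of the longest contiguous suffix of the one-line
notation of `σ` ending at position `i` whose maximum entry is `σ i`. -/
def ell (n : ℕ) (σ : Equiv.Perm (Fin n)) (i : Fin n) : ℕ :=
  (Finset.univ.filter
      (fun j : Fin n => j ≤ i ∧ ∀ t : Fin n, j ≤ t → t ≤ i → σ t ≤ σ i)).sup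
    (fun j => i.val - j.val + 1)

namespace PfAux

def step (n : ℕ) (π : Fin n → ℕ) (m : ℕ → ℕ) (j : Fin n) : ℕ → ℕ :=
  if h : ((Finset.Icc (π j) n).filter (fun t => m t = 0)).Nonempty then
    Function.update m (((Finset.Icc (π j) n).filter (fun t => m t = 0)).min' h) (j.val + 1)
  else m

def mAfter (n : ℕ) (π : Fin n → ℕ) (k : ℕ) : ℕ → ℕ :=
  ((List.finRange n).take k).foldl (step n π) (fun _ => 0)

lemma mAfter_n (n : ℕ) (π : Fin n → ℕ) : mAfter n π n = outcomeMap n π := by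
  unfold mAfter outcomeMap step
  rw [List.take_of_length_le (by simp)]

lemma mAfter_succ (n : ℕ) (π : Fin n → ℕ) (k : ℕ) (hk : k < n) :
    mAfter n π (k + 1) = step n π (mAfter n π k) ⟨k, hk⟩ := by
  unfold mAfter
  rw [List.take_succ, List.foldl_append]
  have : (List.finRange n)[k]? = some ⟨k, hk⟩ := by
    rw [List.getElem?_eq_getElem (by simpa using hk)]
    simp [List.getElem_finRange, Fin.cast]
  simp [this]

lemma ell_ge (n : ℕ) (σ : Equiv.Perm (Fin n)) (i j : Fin n) (hj : j ≤ i)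
    (hmax : ∀ t : Fin n, j ≤ t → t ≤ i → σ t ≤ σ i) :
    i.val - j.val + 1 ≤ ell n σ i := by
  apply Finset.le_sup (f := fun j : Fin n => i.val - j.val + 1)
  simp only [Finset.mem_filter, Finset.mem_univ, true_and]
  exact ⟨hj, hmax⟩

lemma ell_pos (n : ℕ) (σ : Equiv.Perm (Fin n)) (i : Fin n) : 1 ≤ ell n σ i := by
  have := ell_ge n σ i i le_rfl (fun t h1 h2 => by
    have : t = i := le_antisymm h2 h1
    simp [this])
  omega

lemma ell_le (n : ℕ) (σ : Equiv.Perm (Fin n)) (i : Fin n) : ell n σ i ≤ i.val + 1 :=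
  Finset.sup_le fun j _ => by omega

lemma ell_exists (n : ℕ) (σ : Equiv.Perm (Fin n)) (i : Fin n) :
    ∃ j : Fin n, j ≤ i ∧ (∀ t : Fin n, j ≤ t → t ≤ i → σ t ≤ σ i) ∧
      ell n σ i = i.val - j.val + 1 := by
  obtain ⟨j, hj, hval⟩ := Finset.exists_mem_eq_sup
    (Finset.univ.filter
      (fun j : Fin n => j ≤ i ∧ ∀ t : Fin n, j ≤ t → t ≤ i → σ t ≤ σ i))
    ⟨i, by
      simp only [Finset.mem_filter, Finset.mem_univ, true_and]
      exact ⟨le_rfl, fun t h1 h2 => by rw [le_antisymm h2 h1]⟩⟩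
    (fun j => i.val - j.val + 1)
  simp only [Finset.mem_filter, Finset.mem_univ, true_and] at hj
  exact ⟨j, hj.1, hj.2, hval⟩

lemma forward (n : ℕ) (σ : Equiv.Perm (Fin n)) (π : Fin n → ℕ)
    (H : ∀ i : Fin n, i.val + 2 - ell n σ i ≤ π (σ i) ∧ π (σ i) ≤ i.val + 1) :
    ∀ k, k ≤ n →
    (∀ i : Fin n, mAfter n π k (i.val + 1) = if (σ i).val < k then (σ i).val + 1 else 0)
      ∧ ∀ t, (t = 0 ∨ n < t) → mAfter n π k t = 0 := by
  intro k
  induction k with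
  | zero => intro _; constructor <;> intros <;> simp [mAfter]
  | succ k ih =>
    intro hk1
    have hk : k < n := hk1
    obtain ⟨ih1, ih2⟩ := ih (le_of_lt hk)
    set c : Fin n := ⟨k, hk⟩ with hc
    set i : Fin n := σ.symm c with hi
    have hσi : σ i = c := σ.apply_symm_apply c
    have hσik : (σ i).val = k := by rw [hσi]
    obtain ⟨hlo, hhi⟩ := H i
    rw [hσi] at hlo hhi
    have hell_le := ell_le n σ i
    have hell_pos := ell_pos n σ i
    have hin : i.val < n := i.isLt
    set m := mAfter n π k with hm
    set F := (Finset.Icc (π c) n).filter (fun t => m t = 0) with hF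
    have hmem : i.val + 1 ∈ F := by
      rw [hF, Finset.mem_filter, Finset.mem_Icc]
      refine ⟨⟨by omega, by omega⟩, ?_⟩
      have := ih1 i
      rw [hσik] at this
      simpa using this
    have hne : F.Nonempty := ⟨_, hmem⟩
    -- every element of F is ≥ i+1
    have hge : ∀ t ∈ F, i.val + 1 ≤ t := by
      intro t ht
      by_contra hlt
      push_neg at hlt
      rw [hF, Finset.mem_filter, Finset.mem_Icc] at ht
      obtain ⟨⟨hpt, htn⟩, hzero⟩ := ht
      obtain ⟨j₀, hj₀i, hj₀max, hj₀val⟩ := ell_exists n σ i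
      have hπc : π c = π (σ i) := by rw [hσi]
      have hple : j₀.val + 1 ≤ π c := by omega
      have ht1 : 1 ≤ t := by omega
      set j' : Fin n := ⟨t - 1, by omega⟩ with hj'
      have hj'le : j' ≤ i := by rw [Fin.le_def]; simp [hj']; omega
      have hj₀j' : j₀ ≤ j' := by rw [Fin.le_def]; simp [hj']; omega
      have hσj' : σ j' ≤ σ i := hj₀max j' hj₀j' hj'le
      have hj'ne : j' ≠ i := by
        intro h
        have := congrArg Fin.val h
        simp only [hj'] at this
        omega
      have hσj'lt : (σ j').val < k := by
        have : σ j' ≠ σ i := fun h => hj'ne (σ.injective h)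
        rw [Fin.le_def] at hσj'
        rw [hσik] at hσj'
        rcases lt_or_eq_of_le hσj' with h | h
        · exact h
        · exact absurd (Fin.ext (h.trans hσik.symm) : σ j' = σ i) this
      have := ih1 j'
      rw [if_pos hσj'lt] at this
      have hj'val : j'.val + 1 = t := by simp [hj']; omega
      rw [hj'val] at this
      rw [this] at hzero
      omega
    have hmin : F.min' hne = i.val + 1 :=
      le_antisymm (Finset.min'_le _ _ hmem) (hge _ (Finset.min'_mem _ _))
    have hstep : mAfter n π (k + 1) = Function.update m (i.val + 1) (k + 1) := by
      rw [mAfter_succ n π k hk, step, ← hm, ← hF, dif_pos hne, hmin]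
    constructor
    · intro i'
      rw [hstep]
      by_cases hii : i' = i
      · subst hii
        rw [Function.update_self, hσik, if_pos (by omega)]
      · have : i'.val + 1 ≠ i.val + 1 := by
          intro h; exact hii (Fin.ext (by omega))
        rw [Function.update_of_ne this]
        have hne2 : (σ i').val ≠ k := by
          intro h
          exact hii (σ.injective (Fin.ext (h.trans hσik.symm)))
        have := ih1 i'
        by_cases hlt : (σ i').val < k
        · rw [if_pos hlt] at this; rw [this, if_pos (by omega)]
        · rw [if_neg hlt] at this; rw [this, if_neg (by omega)]
    · intro t ht
      rw [hstep, Function.update_of_ne (by omega)]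
      exact ih2 t ht

lemma reverse_inv (n : ℕ) (π : Fin n → ℕ) :
    ∀ k, k ≤ n → ∀ t, mAfter n π k t ≤ k ∧
      ∀ j : Fin n, mAfter n π k t = j.val + 1 →
        π j ≤ t ∧ ∀ t', π j ≤ t' → t' < t →
          0 < mAfter n π k t' ∧ mAfter n π k t' ≤ j.val := by
  intro k
  induction k with
  | zero => intro _ t; constructor
            · simp [mAfter]
            · intro j hj; simp [mAfter] at hj
  | succ k ih =>
    intro hk1 t
    have hk : k < n := hk1
    have ih := ih (le_of_lt hk)
    set c : Fin n := ⟨k, hk⟩ with hc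
    set m := mAfter n π k with hm
    set F := (Finset.Icc (π c) n).filter (fun t => m t = 0) with hF
    have hstep' : mAfter n π (k+1) = step n π m c := mAfter_succ n π k hk
    by_cases hne : F.Nonempty
    · set t₀ := F.min' hne with ht₀
      have hmem := Finset.min'_mem F hne
      have hz₀ : m t₀ = 0 := (Finset.mem_filter.mp hmem).2
      have hpt₀ : π c ≤ t₀ := (Finset.mem_Icc.mp (Finset.mem_filter.mp hmem).1).1
      have ht₀n : t₀ ≤ n := (Finset.mem_Icc.mp (Finset.mem_filter.mp hmem).1).2
      have hstep : mAfter n π (k+1) = Function.update m t₀ (k+1) := by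
        rw [hstep', step, dif_pos hne]
      have hupd : ∀ u, u ≠ t₀ → mAfter n π (k+1) u = m u := by
        intro u hu; rw [hstep, Function.update_of_ne hu]
      have hupd0 : mAfter n π (k+1) t₀ = k + 1 := by
        rw [hstep, Function.update_self]
      constructor
      · by_cases h : t = t₀
        · rw [h, hupd0]
        · rw [hupd t h]; exact le_trans (ih t).1 (by omega)
      · intro j hj
        by_cases h : t = t₀
        · subst h
          rw [hupd0] at hj
          have hjc : j = c := Fin.ext (show j.val = k by omega)
          subst hjc
          refine ⟨hpt₀, ?_⟩
          intro t' hpt' hlt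
          have ht'F : t' ∉ F := fun hmem' => by
            have := Finset.min'_le F t' hmem'
            omega
          have : ¬ (m t' = 0) := by
            intro hz
            exact ht'F (by rw [hF, Finset.mem_filter, Finset.mem_Icc]
                           exact ⟨⟨hpt', by omega⟩, hz⟩)
          have hne' : t' ≠ t₀ := by omega
          rw [hupd t' hne']
          exact ⟨by omega, (ih t').1⟩
        · rw [hupd t h] at hj
          obtain ⟨h1, h2⟩ := (ih t).2 j hj
          refine ⟨h1, ?_⟩
          intro t' hpt' hlt
          obtain ⟨h3, h4⟩ := h2 t' hpt' hlt
          have hne' : t' ≠ t₀ := by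
            intro h; rw [h, hz₀] at h3; omega
          rw [hupd t' hne']
          exact ⟨h3, h4⟩
    · have hstep : mAfter n π (k+1) = m := by
        rw [hstep', step, dif_neg hne]
      rw [hstep]
      refine ⟨le_trans (ih t).1 (by omega), ?_⟩
      intro j hj
      exact (ih t).2 j hj

lemma reverse (n : ℕ) (σ : Equiv.Perm (Fin n)) (π : Fin n → ℕ)
    (hpos : ∀ j, 1 ≤ π j)
    (hout : ∀ i : Fin n, mAfter n π n (i.val + 1) = (σ i).val + 1) :
    ∀ i : Fin n, i.val + 2 - ell n σ i ≤ π (σ i) ∧ π (σ i) ≤ i.val + 1 := by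
  intro i
  obtain ⟨hub, hocc⟩ := (reverse_inv n π n le_rfl (i.val + 1)).2 (σ i) (hout i)
  have hp1 : 1 ≤ π (σ i) := hpos (σ i)
  have hin : i.val < n := i.isLt
  set j₀ : Fin n := ⟨π (σ i) - 1, by omega⟩ with hj₀
  have hmax : ∀ t : Fin n, j₀ ≤ t → t ≤ i → σ t ≤ σ i := by
    intro t h1 h2
    by_cases ht : t = i
    · rw [ht]
    · have htlt : t.val < i.val := lt_of_le_of_ne h2 (fun h => ht (Fin.ext h))
      have h1' : j₀.val ≤ t.val := h1
      obtain ⟨hpos', hle'⟩ := hocc (t.val + 1) (by simp only [hj₀] at h1'; omega) (by omega)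
      rw [hout t] at hle'
      rw [Fin.le_def]
      omega
  have hge := ell_ge n σ i j₀ (by rw [Fin.le_def]; simp only [hj₀]; omega) hmax
  have hle := ell_le n σ i
  simp only [hj₀] at hge
  exact ⟨by omega, hub⟩

end PfAux

open PfAux in
theorem count_restricted_pf_with_outcome (n s : ℕ) (h1 : 1 ≤ s) (h2 : s ≤ n)
    (σ : Equiv.Perm (Fin n)) :
    {π : Fin n → ℕ |
        (∀ j, π j ∈ Finset.Icc 1 s) ∧
        (∀ i ∈ Finset.Icc 1 n, i ≤ (Finset.univ.filter (fun j => π j ≤ i)).card) ∧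
        ∀ i : Fin n, outcomeMap n π (i.val + 1) = (σ i).val + 1}.ncard =
      ∏ i : Fin n, (ell n σ i - ((i.val + 1) - s)) := by
  classical
  set T : Fin n → Finset ℕ := fun j =>
    Finset.Icc ((σ.symm j).val + 2 - ell n σ (σ.symm j)) (min ((σ.symm j).val + 1) s) with hT
  have hset : {π : Fin n → ℕ |
        (∀ j, π j ∈ Finset.Icc 1 s) ∧
        (∀ i ∈ Finset.Icc 1 n, i ≤ (Finset.univ.filter (fun j => π j ≤ i)).card) ∧
        ∀ i : Fin n, outcomeMap n π (i.val + 1) = (σ i).val + 1}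
      = ↑(Fintype.piFinset T) := by
    ext π
    simp only [Set.mem_setOf_eq, Finset.coe_sort_coe, Finset.mem_coe,
      Fintype.mem_piFinset, hT]
    constructor
    · rintro ⟨hπ1, _, hπ3⟩ j
      have hpos : ∀ j, 1 ≤ π j := fun j => (Finset.mem_Icc.mp (hπ1 j)).1
      have hs : π j ≤ s := (Finset.mem_Icc.mp (hπ1 j)).2
      have hout : ∀ i : Fin n, mAfter n π n (i.val + 1) = (σ i).val + 1 := by
        intro i; rw [mAfter_n]; exact hπ3 i
      obtain ⟨hlo, hhi⟩ := reverse n σ π hpos hout (σ.symm j)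
      rw [σ.apply_symm_apply] at hlo hhi
      exact Finset.mem_Icc.mpr ⟨hlo, le_min hhi hs⟩
    · intro hb
      have H : ∀ i : Fin n, i.val + 2 - ell n σ i ≤ π (σ i) ∧ π (σ i) ≤ i.val + 1 := by
        intro i
        have := Finset.mem_Icc.mp (hb (σ i))
        rw [σ.symm_apply_apply] at this
        exact ⟨this.1, le_trans this.2 (min_le_left _ _)⟩
      have hπ1 : ∀ j, π j ∈ Finset.Icc 1 s := by
        intro j
        have := Finset.mem_Icc.mp (hb j)
        have hle := ell_le n σ (σ.symm j)
        rw [Finset.mem_Icc]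
        exact ⟨by omega, le_trans this.2 (min_le_right _ _)⟩
      have hout := (forward n σ π H n le_rfl).1
      have hπ3 : ∀ i : Fin n, outcomeMap n π (i.val + 1) = (σ i).val + 1 := by
        intro i
        rw [← mAfter_n]
        have := hout i
        rw [if_pos (σ i).isLt] at this
        exact this
      refine ⟨hπ1, ?_, hπ3⟩
      intro i hi
      rw [Finset.mem_Icc] at hi
      have himg : (Finset.univ.filter fun t : Fin n => t.val < i).image σ ⊆
          Finset.univ.filter (fun j => π j ≤ i) := by
        intro x hx
        rw [Finset.mem_image] at hx
        obtain ⟨t, ht, rfl⟩ := hx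
        rw [Finset.mem_filter] at ht ⊢
        exact ⟨Finset.mem_univ _, le_trans (H t).2 (by omega)⟩
      have hcard : (Finset.univ.filter fun t : Fin n => t.val < i).card = i := by
        have : (Finset.univ.filter fun t : Fin n => t.val < i)
            = Finset.map (Fin.castLEEmb hi.2) Finset.univ := by
          ext t
          simp only [Finset.mem_filter, Finset.mem_univ, true_and, Finset.mem_map,
            Fin.castLEEmb_apply]
          constructor
          · intro h; exact ⟨⟨t.val, h⟩, rfl⟩
          · rintro ⟨u, rfl⟩; exact u.isLt
        rw [this, Finset.card_map, Finset.card_univ, Fintype.card_fin]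
      calc i = ((Finset.univ.filter fun t : Fin n => t.val < i).image σ).card := by
              rw [Finset.card_image_of_injective _ σ.injective, hcard]
        _ ≤ _ := Finset.card_le_card himg
  rw [hset, Set.ncard_coe_finset, Fintype.card_piFinset]
  rw [← Equiv.prod_comp σ (fun j => (T j).card)]
  apply Finset.prod_congr rfl
  intro i _
  have hle := ell_le n σ i
  have hpos := ell_pos n σ i
  rw [hT]
  simp only [σ.symm_apply_apply]
  rw [Nat.card_Icc]
  omega
end

section
/- For g, s positive integers, let S = {1, g+1, 2g+1, …, (s−1)g+1}. The number of S-restricted parking functions on gs−1 cars is s^{gs−2}. -/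
open Finset

namespace CountModularAux

/-- The cycle lemma: if `S` drops by exactly 1 over each period `s`, there is a unique
starting point `k < s` from which all partial windows of length `1..s-1` are nonnegative. -/
lemma cycle_exists_unique (s : ℕ) (hs : 0 < s) (S : ℕ → ℤ)
    (hS : ∀ n, S (n + s) = S n - 1) :
    ∃! k, k < s ∧ ∀ t, 1 ≤ t → t ≤ s - 1 → S k ≤ S (k + t) := by
  classical
  have key : ∀ a b, a < s → b < s → (∀ t, 1 ≤ t → t ≤ s - 1 → S a ≤ S (a + t)) →
      (∀ t, 1 ≤ t → t ≤ s - 1 → S b ≤ S (b + t)) → a < b → False := by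
    intro a b has hbs hga hgb hab
    have h1 : S a ≤ S b := by
      have := hga (b - a) (by omega) (by omega)
      rwa [show a + (b - a) = b by omega] at this
    have h2 : S b ≤ S (a + s) := by
      have := hgb (a + s - b) (by omega) (by omega)
      rwa [show b + (a + s - b) = a + s by omega] at this
    have h3 : S (a + s) = S a - 1 := hS a
    omega
  have hmin : ∃ k, k < s ∧ ∀ j, j < s → S k ≤ S j := by
    obtain ⟨k, hk, hm⟩ := Finset.exists_min_image (Finset.range s) S ⟨0, Finset.mem_range.2 hs⟩
    exact ⟨k, Finset.mem_range.1 hk, fun j hj => hm j (Finset.mem_range.2 hj)⟩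
  set k := Nat.find hmin with hkdef
  obtain ⟨hks, hkm⟩ := Nat.find_spec hmin
  have hgood : ∀ t, 1 ≤ t → t ≤ s - 1 → S k ≤ S (k + t) := by
    intro t ht1 hts
    rcases lt_or_ge (k + t) s with h | h
    · exact hkm _ h
    · have h2 : k + t - s < k := by omega
      have h3 : S (k + t) = S (k + t - s) - 1 := by
        have := hS (k + t - s)
        rw [show k + t - s + s = k + t by omega] at this
        omega
      have h4 : S k ≤ S (k + t - s) := hkm _ (by omega)
      have h5 : S k ≠ S (k + t - s) := by
        intro h5
        exact Nat.find_min hmin h2 ⟨by omega, fun j hj => h5 ▸ hkm j hj⟩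
      omega
  refine ⟨k, ⟨hks, hgood⟩, ?_⟩
  rintro k' ⟨hk's, hk'good⟩
  rcases lt_trichotomy k' k with h | h | h
  · exact (key k' k hk's hks hk'good hgood h).elim
  · exact h
  · exact (key k k' hks hk's hgood hk'good h).elim

variable {g s : ℕ}

/-- Number of cars mapped to residue class `u`. -/
def fib (g s : ℕ) (σ : Fin (g * s - 1) → ZMod s) (u : ℕ) : ℕ :=
  (Finset.univ.filter (fun j => σ j = (u : ZMod s))).card

/-- Partial sums of `fib - g`. -/
def Sp (g s : ℕ) (σ : Fin (g * s - 1) → ZMod s) (n : ℕ) : ℤ :=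
  ∑ u ∈ Finset.range n, ((fib g s σ u : ℤ) - g)

/-- Goodness of a residue assignment. -/
def Good (g s : ℕ) (σ : Fin (g * s - 1) → ZMod s) : Prop :=
  ∀ t, t < s - 1 →
    (t + 1) * g ≤ (Finset.univ.filter (fun j => (σ j).val ≤ t)).card

lemma sum_fib_window (hs : 0 < s) (σ : Fin (g * s - 1) → ZMod s) (n : ℕ) :
    ∑ u ∈ Finset.Ico n (n + s), fib g s σ u = g * s - 1 := by
  haveI : NeZero s := ⟨hs.ne'⟩
  have h1 : (Finset.univ : Finset (Fin (g * s - 1))).card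
      = ∑ r : ZMod s, (Finset.univ.filter (fun j => σ j = r)).card :=
    Finset.card_eq_sum_card_fiberwise (fun x _ => Finset.mem_univ _)
  have h2 : ∑ u ∈ Finset.Ico n (n + s), fib g s σ u
      = ∑ r : ZMod s, (Finset.univ.filter (fun j => σ j = r)).card := by
    refine Finset.sum_nbij' (fun u => (u : ZMod s)) (fun r => n + (r - (n : ZMod s)).val)
      (fun a _ => Finset.mem_univ _) (fun r _ => ?_) (fun u hu => ?_) (fun r _ => ?_)
      (fun u hu => rfl)
    · simp only [Finset.mem_Ico]
      have := ZMod.val_lt (r - (n : ZMod s))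
      omega
    · rw [Finset.mem_Ico] at hu
      show n + ((u : ZMod s) - (n : ZMod s)).val = u
      have h3 : ((u : ZMod s) - (n : ZMod s)) = ((u - n : ℕ) : ZMod s) := by
        rw [Nat.cast_sub hu.1]
      rw [h3, ZMod.val_natCast_of_lt (by omega)]
      omega
    · show (((n + (r - (n : ZMod s)).val : ℕ)) : ZMod s) = r
      push_cast
      rw [ZMod.natCast_rightInverse (r - (n : ZMod s))]
      ring
  rw [h2, ← h1]
  simp

lemma Sp_diff (σ : Fin (g * s - 1) → ZMod s) (k t : ℕ) :
    Sp g s σ (k + t) - Sp g s σ k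
      = (∑ u ∈ Finset.Ico k (k + t), (fib g s σ u : ℤ)) - t * g := by
  rw [Sp, Sp, ← Finset.sum_Ico_eq_sub _ (Nat.le_add_right k t), Finset.sum_sub_distrib,
    Finset.sum_const, Nat.card_Ico, Nat.add_sub_cancel_left, nsmul_eq_mul]

lemma Sp_add (hs : 0 < s) (h2 : 2 ≤ g * s) (σ : Fin (g * s - 1) → ZMod s) (n : ℕ) :
    Sp g s σ (n + s) = Sp g s σ n - 1 := by
  have hd := Sp_diff σ n s
  have hw := sum_fib_window hs σ n
  have hc : (∑ u ∈ Finset.Ico n (n + s), (fib g s σ u : ℤ))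
      = ((g * s - 1 : ℕ) : ℤ) := by
    rw [← hw]; push_cast; ring
  rw [hc] at hd
  have : ((g * s - 1 : ℕ) : ℤ) = (g : ℤ) * s - 1 := by omega
  rw [this] at hd
  nlinarith [hd]

lemma card_shift (hs : 0 < s) (σ : Fin (g * s - 1) → ZMod s) (k t : ℕ) (ht : t + 1 ≤ s) :
    (Finset.univ.filter (fun j => (σ j - (k : ZMod s)).val ≤ t)).card
      = ∑ u ∈ Finset.Ico k (k + (t + 1)), fib g s σ u := by
  haveI : NeZero s := ⟨hs.ne'⟩
  have hset : Finset.univ.filter (fun j => (σ j - (k : ZMod s)).val ≤ t)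
      = (Finset.Ico k (k + (t + 1))).biUnion
          (fun u => Finset.univ.filter (fun j => σ j = (u : ZMod s))) := by
    ext j
    simp only [Finset.mem_biUnion, Finset.mem_filter, Finset.mem_univ, true_and,
      Finset.mem_Ico]
    constructor
    · intro hj
      refine ⟨k + (σ j - (k : ZMod s)).val, ⟨Nat.le_add_right _ _, by omega⟩, ?_⟩
      push_cast
      rw [ZMod.natCast_rightInverse (σ j - (k : ZMod s))]
      ring
    · rintro ⟨u, ⟨h1, h2⟩, h3⟩
      rw [h3]
      have h4 : ((u : ZMod s) - (k : ZMod s)) = ((u - k : ℕ) : ZMod s) := by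
        rw [Nat.cast_sub h1]
      rw [h4, ZMod.val_natCast_of_lt (by omega)]
      omega
  have hdisj : ∀ x ∈ Finset.Ico k (k + (t + 1)), ∀ y ∈ Finset.Ico k (k + (t + 1)), x ≠ y →
      Disjoint (Finset.univ.filter (fun j => σ j = (x : ZMod s)))
        (Finset.univ.filter (fun j => σ j = (y : ZMod s))) := by
    intro x hx y hy hxy
    simp only [Finset.mem_Ico] at hx hy
    simp only [Finset.disjoint_left, Finset.mem_filter, Finset.mem_univ, true_and]
    intro j hjx hjy
    apply hxy
    have hcast : (x : ZMod s) = (y : ZMod s) := by rw [← hjx, ← hjy]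
    have h4 : ((x - k : ℕ) : ZMod s) = ((y - k : ℕ) : ZMod s) := by
      rw [Nat.cast_sub hx.1, Nat.cast_sub hy.1, hcast]
    have h5 := ZMod.val_natCast_of_lt (show x - k < s by omega)
    have h6 := ZMod.val_natCast_of_lt (show y - k < s by omega)
    have := congrArg ZMod.val h4
    omega
  rw [hset, Finset.card_biUnion hdisj]
  rfl

lemma good_shift_iff (hs : 0 < s) (σ : Fin (g * s - 1) → ZMod s) (k : ℕ) :
    Good g s (fun j => σ j - (k : ZMod s)) ↔
      ∀ t, 1 ≤ t → t ≤ s - 1 → Sp g s σ k ≤ Sp g s σ (k + t) := by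
  have key : ∀ t, t < s - 1 →
      (((t + 1) * g : ℕ) ≤ (Finset.univ.filter
          (fun j => (σ j - (k : ZMod s)).val ≤ t)).card
        ↔ Sp g s σ k ≤ Sp g s σ (k + (t + 1))) := by
    intro t ht
    rw [card_shift hs σ k t (by omega)]
    have hd := Sp_diff σ k (t + 1)
    have hcast : ((∑ u ∈ Finset.Ico k (k + (t + 1)), fib g s σ u : ℕ) : ℤ)
        = ∑ u ∈ Finset.Ico k (k + (t + 1)), (fib g s σ u : ℤ) := by push_cast; ring
    rw [← hcast] at hd
    push_cast at hd
    constructor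
    · intro h
      have h' : (((t + 1) * g : ℕ) : ℤ)
          ≤ ((∑ u ∈ Finset.Ico k (k + (t + 1)), fib g s σ u : ℕ) : ℤ) := Nat.cast_le.2 h
      push_cast at h'
      linarith
    · intro h
      have h' : (((t + 1) * g : ℕ) : ℤ)
          ≤ ((∑ u ∈ Finset.Ico k (k + (t + 1)), fib g s σ u : ℕ) : ℤ) := by
        push_cast
        linarith
      exact_mod_cast h'
  constructor
  · intro h t ht1 hts
    have := (key (t - 1) (by omega)).1 (h (t - 1) (by omega))
    rwa [show t - 1 + 1 = t by omega] at this
  · intro h t ht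
    exact (key t ht).2 (h (t + 1) (by omega) (by omega))

lemma exists_unique_shift (hs : 0 < s) (h2 : 2 ≤ g * s) (σ : Fin (g * s - 1) → ZMod s) :
    ∃! c : ZMod s, Good g s (fun j => σ j + c) := by
  haveI : NeZero s := ⟨hs.ne'⟩
  obtain ⟨k, ⟨hks, hkgood⟩, huniq⟩ :=
    cycle_exists_unique s hs (Sp g s σ) (Sp_add hs h2 σ)
  refine ⟨-(k : ZMod s), ?_, ?_⟩
  · have := (good_shift_iff hs σ k).2 hkgood
    simpa [sub_eq_add_neg] using this
  · intro c hc
    set k' := (-c).val with hk'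
    have hc' : c = -((k' : ℕ) : ZMod s) := by
      rw [hk', ZMod.natCast_rightInverse (-c), neg_neg]
    have hgood' : Good g s (fun j => σ j - ((k' : ℕ) : ZMod s)) := by
      have : (fun j => σ j - ((k' : ℕ) : ZMod s)) = fun j => σ j + c := by
        funext j; rw [hc']; ring
      rw [this]; exact hc
    have hk'good := (good_shift_iff hs σ k').1 hgood'
    have hkk : k' = k := huniq k' ⟨ZMod.val_lt _, hk'good⟩
    rw [hc', hkk]

lemma card_good (hs : 0 < s) (h2 : 2 ≤ g * s) :
    Nat.card {σ : Fin (g * s - 1) → ZMod s // Good g s σ} * s = s ^ (g * s - 1) := by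
  haveI : NeZero s := ⟨hs.ne'⟩
  have hbij : Function.Bijective
      (fun p : {σ : Fin (g * s - 1) → ZMod s // Good g s σ} × ZMod s =>
        (fun j => p.1.1 j + p.2 : Fin (g * s - 1) → ZMod s)) := by
    constructor
    · rintro ⟨⟨σ, hσ⟩, c⟩ ⟨⟨σ', hσ'⟩, c'⟩ heq
      simp only at heq
      have hpt : ∀ j, σ j + c = σ' j + c' := fun j => congrFun heq j
      have h1 : Good g s (fun j => (σ j + c) + (-c)) := by
        have he1 : (fun j => (σ j + c) + (-c)) = σ := by funext j; ring
        rw [he1]; exact hσ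
      have h2' : Good g s (fun j => (σ j + c) + (-c')) := by
        have he2 : (fun j => (σ j + c) + (-c')) = σ' := by
          funext j; rw [hpt j]; ring
        rw [he2]; exact hσ'
      obtain ⟨c₀, hc₀, huniq⟩ := exists_unique_shift hs h2 (fun j => σ j + c)
      have hcc : (-c : ZMod s) = -c' := (huniq _ h1).trans (huniq _ h2').symm
      have hcc' : c = c' := by
        have := congrArg Neg.neg hcc; simpa using this
      subst hcc'
      have hσσ : σ = σ' := by
        funext j
        exact add_right_cancel (hpt j)
      simp [hσσ]
    · intro τ
      obtain ⟨c, hc, -⟩ := exists_unique_shift hs h2 τ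
      refine ⟨⟨⟨fun j => τ j + c, hc⟩, -c⟩, ?_⟩
      funext j
      simp
  have hcard := Nat.card_eq_of_bijective _ hbij
  rw [Nat.card_prod] at hcard
  have hz : Nat.card (ZMod s) = s := Nat.card_zmod s
  have hf : Nat.card (Fin (g * s - 1) → ZMod s) = s ^ (g * s - 1) := by
    rw [Nat.card_eq_fintype_card, Fintype.card_fun, ZMod.card, Fintype.card_fin]
  rw [hz, hf] at hcard
  exact hcard

lemma cond_iff (hg : 0 < g) (hs : 0 < s) (h2 : 2 ≤ g * s)
    (π : Fin (g * s - 1) → ℕ) (hπ : ∀ j, ∃ t, t < s ∧ π j = t * g + 1) :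
    (∀ i ∈ Finset.Icc 1 (g * s - 1),
        i ≤ (Finset.univ.filter (fun j => π j ≤ i)).card)
      ↔ ∀ t, t < s - 1 →
          (t + 1) * g ≤ (Finset.univ.filter (fun j => (π j - 1) / g ≤ t)).card := by
  have hval : ∀ j, (π j - 1) / g < s ∧ π j = ((π j - 1) / g) * g + 1 := by
    intro j
    obtain ⟨t, hts, hjt⟩ := hπ j
    have : (π j - 1) / g = t := by
      rw [hjt]
      simp [Nat.mul_div_cancel _ hg]
    rw [this]
    exact ⟨hts, hjt⟩
  constructor
  · intro h t ht
    have hi1 : 1 ≤ (t + 1) * g := Nat.mul_pos (Nat.succ_pos t) hg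
    have hi2 : (t + 1) * g ≤ g * s - 1 := by
      have h3 : (t + 1) * g ≤ (s - 1) * g := Nat.mul_le_mul_right _ (by omega)
      have h4 : (s - 1) * g = s * g - g := by rw [Nat.sub_mul, one_mul]
      have h5 : s * g = g * s := Nat.mul_comm s g
      omega
    have := h ((t + 1) * g) (Finset.mem_Icc.2 ⟨hi1, hi2⟩)
    have hfe : Finset.univ.filter (fun j => π j ≤ (t + 1) * g)
        = Finset.univ.filter (fun j => (π j - 1) / g ≤ t) := by
      ext j
      simp only [Finset.mem_filter, Finset.mem_univ, true_and]
      obtain ⟨hlt, heq⟩ := hval j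
      constructor
      · intro hle
        have : (π j - 1) / g * g < (t + 1) * g := by omega
        have := Nat.lt_of_mul_lt_mul_right this
        omega
      · intro hle
        have : (π j - 1) / g * g ≤ t * g := Nat.mul_le_mul_right _ hle
        have ht' : t * g + g ≤ (t + 1) * g := by rw [Nat.add_mul, one_mul]
        omega
    rwa [hfe] at this
  · intro h i hi
    rw [Finset.mem_Icc] at hi
    set t := (i - 1) / g with htdef
    have hfe : Finset.univ.filter (fun j => π j ≤ i)
        = Finset.univ.filter (fun j => (π j - 1) / g ≤ t) := by
      ext j
      simp only [Finset.mem_filter, Finset.mem_univ, true_and]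
      obtain ⟨hlt, heq⟩ := hval j
      rw [htdef]
      constructor
      · intro hle
        apply Nat.div_le_div_right
        omega
      · intro hle
        have h3 : (π j - 1) / g * g ≤ (i - 1) / g * g :=
          Nat.mul_le_mul_right _ hle
        have h4 : (i - 1) / g * g ≤ i - 1 := Nat.div_mul_le_self _ _
        omega
    rw [hfe]
    rcases lt_or_ge t (s - 1) with hts | hts
    · have hcard := h t hts
      have hi2 : i ≤ (t + 1) * g := by
        apply Nat.le_of_pred_lt
        have hdm := Nat.div_add_mod (i - 1) g
        have hmod : (i - 1) % g < g := Nat.mod_lt _ hg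
        calc i.pred = i - 1 := rfl
          _ = g * t + (i - 1) % g := by rw [htdef]; omega
          _ < g * t + g := by omega
          _ = (t + 1) * g := by ring
      omega
    · have hall : Finset.univ.filter (fun j => (π j - 1) / g ≤ t)
          = (Finset.univ : Finset (Fin (g * s - 1))) := by
        apply Finset.filter_true_of_mem
        intro j _
        have := (hval j).1
        omega
      rw [hall, Finset.card_univ, Fintype.card_fin]
      omega

end CountModularAux

open CountModularAux in
theorem count_modular_restricted (g s : ℕ) (hg : 0 < g) (hs : 0 < s) :
    {π : Fin (g * s - 1) → ℕ |
        (∀ j, π j ∈ (Finset.range s).image (fun t => t * g + 1)) ∧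
        ∀ i ∈ Finset.Icc 1 (g * s - 1),
          i ≤ (Finset.univ.filter (fun j => π j ≤ i)).card}.ncard =
      s ^ (g * s - 2) := by
  rcases lt_or_ge (g * s) 2 with h2 | h2
  · -- g = s = 1
    have hg1 : g = 1 := by nlinarith
    have hs1 : s = 1 := by nlinarith
    subst hg1; subst hs1
    have hset : {π : Fin (1 * 1 - 1) → ℕ |
        (∀ j, π j ∈ (Finset.range 1).image (fun t => t * 1 + 1)) ∧
        ∀ i ∈ Finset.Icc 1 (1 * 1 - 1),
          i ≤ (Finset.univ.filter (fun j => π j ≤ i)).card} = Set.univ := by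
      ext π
      simp only [Set.mem_setOf_eq, Set.mem_univ, iff_true]
      constructor
      · intro j; exact j.elim0
      · intro i hi
        simp at hi
    rw [hset, Set.ncard_univ]
    simp [Nat.card_unique]
  · haveI : NeZero s := ⟨hs.ne'⟩
    set P := {π : Fin (g * s - 1) → ℕ |
        (∀ j, π j ∈ (Finset.range s).image (fun t => t * g + 1)) ∧
        ∀ i ∈ Finset.Icc 1 (g * s - 1),
          i ≤ (Finset.univ.filter (fun j => π j ≤ i)).card} with hP
    have hmem : ∀ π : Fin (g * s - 1) → ℕ, π ∈ P ↔
        (∀ j, ∃ t, t < s ∧ π j = t * g + 1) ∧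
        ∀ i ∈ Finset.Icc 1 (g * s - 1),
          i ≤ (Finset.univ.filter (fun j => π j ≤ i)).card := by
      intro π
      rw [hP]
      simp only [Set.mem_setOf_eq, Finset.mem_image, Finset.mem_range]
      constructor
      · rintro ⟨h1, h3⟩
        refine ⟨fun j => ?_, h3⟩
        obtain ⟨t, ht, heq⟩ := h1 j
        exact ⟨t, ht, heq.symm⟩
      · rintro ⟨h1, h3⟩
        refine ⟨fun j => ?_, h3⟩
        obtain ⟨t, ht, heq⟩ := h1 j
        exact ⟨t, ht, heq.symm⟩
    have hequiv : Nat.card P = Nat.card {σ : Fin (g * s - 1) → ZMod s // Good g s σ} := by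
      apply Nat.card_congr
      refine ⟨fun π => ⟨fun j => (((π.1 j - 1) / g : ℕ) : ZMod s), ?_⟩,
              fun σ => ⟨fun j => (σ.1 j).val * g + 1, ?_⟩, ?_, ?_⟩
      · -- Good of image
        obtain ⟨h1, h3⟩ := (hmem π.1).1 π.2
        intro t ht
        have hgood := (cond_iff hg hs h2 π.1 h1).1 h3 t ht
        have hfe : (Finset.univ.filter
              (fun j => ((((π.1 j - 1) / g : ℕ) : ZMod s)).val ≤ t))
            = Finset.univ.filter (fun j => (π.1 j - 1) / g ≤ t) := by
          ext j
          simp only [Finset.mem_filter, Finset.mem_univ, true_and]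
          obtain ⟨u, hu, hju⟩ := h1 j
          have hlt : (π.1 j - 1) / g < s := by
            rw [hju]; simpa [Nat.mul_div_cancel _ hg] using hu
          rw [ZMod.val_natCast_of_lt hlt]
        rw [hfe]
        exact hgood
      · -- membership in P
        rw [hmem]
        have h1 : ∀ j, ∃ t, t < s ∧ (σ.1 j).val * g + 1 = t * g + 1 :=
          fun j => ⟨(σ.1 j).val, ZMod.val_lt _, rfl⟩
        refine ⟨h1, ?_⟩
        rw [cond_iff hg hs h2 _ h1]
        intro t ht
        have hfe : (Finset.univ.filter
              (fun j => ((σ.1 j).val * g + 1 - 1) / g ≤ t))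
            = Finset.univ.filter (fun j => (σ.1 j).val ≤ t) := by
          ext j
          simp [Nat.mul_div_cancel _ hg]
        rw [hfe]
        exact σ.2 t ht
      · -- left inverse
        rintro ⟨π, hπ⟩
        obtain ⟨h1, -⟩ := (hmem π).1 hπ
        apply Subtype.ext
        funext j
        simp only
        obtain ⟨u, hu, hju⟩ := h1 j
        have hlt : (π j - 1) / g < s := by
          rw [hju]; simpa [Nat.mul_div_cancel _ hg] using hu
        rw [ZMod.val_natCast_of_lt hlt]
        rw [hju]
        simp [Nat.mul_div_cancel _ hg]
      · -- right inverse
        rintro ⟨σ, hσ⟩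
        apply Subtype.ext
        funext j
        simp only
        rw [Nat.add_sub_cancel, Nat.mul_div_cancel _ hg,
          ZMod.natCast_rightInverse (σ j)]
    have hcg := card_good (g := g) hs h2
    have hpow : s ^ (g * s - 1) = s ^ (g * s - 2) * s := by
      rw [← pow_succ]
      congr 1
      omega
    rw [hpow] at hcg
    have hfinal : Nat.card {σ : Fin (g * s - 1) → ZMod s // Good g s σ}
        = s ^ (g * s - 2) := Nat.eq_of_mul_eq_mul_right hs hcg
    rw [← Nat.card_coe_set_eq, hequiv, hfinal]
end

section
/- For any S⊆[n] with |S| = s, the map π ↦ f∘π, where f:[n]→[s] is defined by f(i) = |S∩[i]|, restricts to a bijection from S-restricted parking functions on n cars to u-parking functions with u_i = |S∩[i]|. -/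
section Aux

variable (S : Finset ℕ)

private def fS (x : ℕ) : ℕ := (S.filter (· ≤ x)).card

private lemma fS_mono {a b : ℕ} (h : a ≤ b) : fS S a ≤ fS S b := by
  apply Finset.card_le_card
  intro x hx
  simp only [Finset.mem_filter] at *
  exact ⟨hx.1, le_trans hx.2 h⟩

private lemma fS_lt {a b : ℕ} (ha : a ∈ S) (h : b < a) : fS S b < fS S a := by
  apply Finset.card_lt_card
  constructor
  · intro x hx
    simp only [Finset.mem_filter] at *
    exact ⟨hx.1, le_trans hx.2 h.le⟩
  · intro hsub
    have := hsub (Finset.mem_filter.mpr ⟨ha, le_refl a⟩)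
    have := (Finset.mem_filter.mp this).2
    omega

private lemma fS_le_iff {a b : ℕ} (ha : a ∈ S) : fS S a ≤ fS S b ↔ a ≤ b := by
  constructor
  · intro h
    by_contra hab
    exact absurd h (not_le.mpr (fS_lt S ha (not_le.mp hab)))
  · exact fS_mono S

private lemma fS_mem {a : ℕ} (ha : a ∈ S) : fS S a ∈ Finset.Icc 1 S.card := by
  refine Finset.mem_Icc.mpr ⟨?_, ?_⟩
  · exact Finset.card_pos.mpr ⟨a, Finset.mem_filter.mpr ⟨ha, le_refl a⟩⟩
  · exact Finset.card_le_card (Finset.filter_subset _ _)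

private lemma fS_image : S.image (fS S) = Finset.Icc 1 S.card := by
  apply Finset.eq_of_subset_of_card_le
  · intro x hx
    obtain ⟨a, ha, rfl⟩ := Finset.mem_image.mp hx
    exact fS_mem S ha
  · rw [Nat.card_Icc]
    rw [Finset.card_image_of_injOn]
    · omega
    · intro a ha b hb hab
      by_contra hne
      rcases Nat.lt_or_ge a b with h | h
      · exact absurd hab (Nat.ne_of_lt (fS_lt S hb h))
      · have : b < a := lt_of_le_of_ne h (fun e => hne e.symm)
        exact absurd hab.symm (Nat.ne_of_lt (fS_lt S ha this))

end Aux

theorem restricted_equiv_u_parking (n : ℕ) (S : Finset ℕ)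
    (hS : S ⊆ Finset.Icc 1 n) :
    Set.BijOn (fun (π : Fin n → ℕ) => fun j => (S.filter (· ≤ π j)).card)
      {π : Fin n → ℕ |
        (∀ j, π j ∈ S) ∧
        ∀ i ∈ Finset.Icc 1 n, i ≤ (Finset.univ.filter (fun j => π j ≤ i)).card}
      {π : Fin n → ℕ |
        (∀ j, π j ∈ Finset.Icc 1 S.card) ∧
        ∀ i ∈ Finset.Icc 1 n,
          i ≤ (Finset.univ.filter
                (fun j => π j ≤ (S.filter (· ≤ i)).card)).card} := by
  refine ⟨?_, ?_, ?_⟩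
  · -- MapsTo
    rintro π ⟨h1, h2⟩
    refine ⟨fun j => fS_mem S (h1 j), ?_⟩
    intro i hi
    have : (Finset.univ.filter (fun j : Fin n => fS S (π j) ≤ fS S i)) =
        (Finset.univ.filter (fun j => π j ≤ i)) := by
      apply Finset.filter_congr
      intro j _
      simp [fS_le_iff S (h1 j)]
    calc i ≤ (Finset.univ.filter (fun j => π j ≤ i)).card := h2 i hi
      _ = _ := (congrArg Finset.card this).symm
  · -- InjOn
    rintro π ⟨h1, _⟩ π' ⟨h1', _⟩ heq
    funext j
    have hj : fS S (π j) = fS S (π' j) := congrFun heq j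
    exact le_antisymm ((fS_le_iff S (h1 j)).mp hj.le)
      ((fS_le_iff S (h1' j)).mp hj.ge)
  · -- SurjOn
    rintro σ ⟨h1, h2⟩
    have hmem : ∀ j, ∃ a, a ∈ S ∧ fS S a = σ j := by
      intro j
      have : σ j ∈ S.image (fS S) := by rw [fS_image]; exact h1 j
      simpa using Finset.mem_image.mp this
    choose π hπS hπf using hmem
    refine ⟨π, ⟨hπS, ?_⟩, funext fun j => hπf j⟩
    intro i hi
    have : (Finset.univ.filter (fun j : Fin n => π j ≤ i)) =
        (Finset.univ.filter (fun j => σ j ≤ fS S i)) := by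
      apply Finset.filter_congr
      intro j _
      simp [← hπf j, fS_le_iff S (hπS j)]
    calc i ≤ (Finset.univ.filter (fun j => σ j ≤ fS S i)).card := h2 i hi
      _ = _ := (congrArg Finset.card this).symm
end
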